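/- arXiv:1802.10225 — 6 statements merged into one kernel-verified Lean document; each statement's English description precedes it below -/
import Mathlib

section
/- Let N be a standard normal random variable and for each positive integer k define c₁(k) := √(2k−1)/‖N‖_{2k}, where ‖N‖_{2k} := (E[N^{2k}])^{1/(2k)} = ((2k)!/(2^k k!))^{1/(2k)}. Then c₁ is strictly increasing in k, c₁(1) = 1, and lim_{k→∞} c₁(k) = √e. -/
open Real Filter

/-- The `2k`-norm of a standard normal random variable: `(E N^{2k})^{1/(2k)}`,
with `E N^{2k} = (2k)! / (2^k k!)`. -/
noncomputable def normalNorm (k : ℕ) : ℝ :=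
  (((2 * k).factorial : ℝ) / (2 ^ k * (k.factorial : ℝ))) ^ ((2 * (k : ℝ))⁻¹)

/-- `c₁(k) := √(2k−1) / ‖N‖_{2k}`. -/
noncomputable def c₁ (k : ℕ) : ℝ := Real.sqrt (2 * (k : ℝ) - 1) / normalNorm k






-- sinh x < x * cosh x for x > 0
lemma sinh_lt_mul_cosh {x : ℝ} (hx : 0 < x) : Real.sinh x < x * Real.cosh x := by
  have h : StrictMonoOn (fun y : ℝ => y * Real.cosh y - Real.sinh y) (Set.Ici 0) := by
    apply strictMonoOn_of_deriv_pos (convex_Ici 0)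
    · exact ((continuous_id.mul Real.continuous_cosh).sub Real.continuous_sinh).continuousOn
    · intro y hy
      rw [interior_Ici, Set.mem_Ioi] at hy
      have h1 : HasDerivAt (fun y : ℝ => y * Real.cosh y - Real.sinh y)
          (1 * Real.cosh y + y * Real.sinh y - Real.cosh y) y :=
        ((hasDerivAt_id y).mul (Real.hasDerivAt_cosh y)).sub (Real.hasDerivAt_sinh y)
      rw [h1.deriv]

      nlinarith [Real.sinh_pos_iff.2 hy]
  have := h (Set.self_mem_Ici) (Set.mem_Ici.2 hx.le) hx
  simpa using this

-- (B): log t < (t - t⁻¹)/2 for t > 1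
lemma log_lt_half {t : ℝ} (ht : 1 < t) : Real.log t < (t - t⁻¹) / 2 := by
  have h0 : 0 < t := by linarith
  have hl : 0 < Real.log t := Real.log_pos ht
  have := (Real.self_lt_sinh_iff).2 hl
  rwa [Real.sinh_log h0] at this

-- (A): 2*(t-1)/(t+1) < log t for t > 1
lemma two_div_lt_log {t : ℝ} (ht : 1 < t) : 2 * (t - 1) / (t + 1) < Real.log t := by
  have h0 : 0 < t := by linarith
  have hs : 1 < Real.sqrt t := by
    rw [show (1:ℝ) = Real.sqrt 1 by simp]
    exact Real.sqrt_lt_sqrt (by norm_num) ht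
  have hs0 : 0 < Real.sqrt t := by linarith
  have hy : 0 < Real.log (Real.sqrt t) := Real.log_pos hs
  have key := sinh_lt_mul_cosh hy
  rw [Real.sinh_log hs0, Real.cosh_log hs0, Real.log_sqrt h0.le] at key
  have hsq : Real.sqrt t ^ 2 = t := Real.sq_sqrt h0.le
  have hcosh : 0 < (Real.sqrt t + (Real.sqrt t)⁻¹) / 2 := by positivity
  -- key : (√t - (√t)⁻¹)/2 < (log t / 2) * ((√t + (√t)⁻¹)/2)
  rw [div_lt_iff₀ (by linarith : (0:ℝ) < t + 1)]
  have hinv : (Real.sqrt t)⁻¹ = Real.sqrt t / t := by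
    rw [eq_div_iff h0.ne', inv_mul_eq_div, div_eq_iff hs0.ne']
    nlinarith [hsq]
  rw [hinv] at key
  have h2 : (Real.sqrt t - Real.sqrt t / t) / 2 = Real.sqrt t * (t - 1) / (2 * t) := by
    field_simp
  have h3 : (Real.sqrt t + Real.sqrt t / t) / 2 = Real.sqrt t * (t + 1) / (2 * t) := by
    field_simp
  rw [h2, h3] at key
  -- key : √t*(t-1)/(2t) < (log t/2) * (√t*(t+1)/(2t))
  have := mul_lt_mul_of_pos_left key (by positivity : (0:ℝ) < 2 * t / Real.sqrt t)
  have e1 : 2 * t / Real.sqrt t * (Real.sqrt t * (t - 1) / (2 * t)) = t - 1 := by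
    field_simp
  have e2 : 2 * t / Real.sqrt t * (Real.log t / 2 * (Real.sqrt t * (t + 1) / (2 * t)))
      = Real.log t / 2 * (t + 1) := by field_simp
  rw [e1, e2] at this
  nlinarith

-- per-term bounds, j ≥ 1 real
lemma term_bounds {j : ℝ} (hj : 1 ≤ j) :
    1 < j * (Real.log (2*j+1) - Real.log (2*j-1)) ∧
    j * (Real.log (2*j+1) - Real.log (2*j-1)) ≤ 1 + (1/2) * (1/(2*j-1) - 1/(2*j+1)) := by
  have ha : (0:ℝ) < 2*j - 1 := by linarith
  have hb : (0:ℝ) < 2*j + 1 := by linarith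
  set t : ℝ := (2*j+1)/(2*j-1) with hts
  have ht : 1 < t := (one_lt_div ha).2 (by linarith)
  have hlog : Real.log (2*j+1) - Real.log (2*j-1) = Real.log t :=
    (Real.log_div hb.ne' ha.ne').symm
  constructor
  · have h := two_div_lt_log ht
    have he : 2 * (t - 1) / (t + 1) = 1 / j := by
      rw [hts]; field_simp; ring
    rw [he] at h
    rw [hlog]
    calc (1:ℝ) = j * (1/j) := by field_simp
    _ < j * Real.log t := by
      exact mul_lt_mul_of_pos_left h (by linarith)
  · have h := log_lt_half ht
    have he : (t - t⁻¹)/2 = 4*j/((2*j-1)*(2*j+1)) := by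
      rw [hts]; rw [inv_div]; field_simp; ring
    rw [he] at h
    rw [hlog]
    have : j * Real.log t ≤ j * (4*j/((2*j-1)*(2*j+1))) :=
      mul_le_mul_of_nonneg_left h.le (by linarith)
    refine this.trans (le_of_eq ?_)
    have ha' := ha.ne'
    have hb' := hb.ne'
    rw [div_sub_div _ _ ha' hb', eq_comm, ← sub_eq_zero]
    field_simp
    ring

noncomputable def Laux (k : ℕ) : ℝ :=
  k * Real.log (2 * (k:ℝ) - 1)
    - Real.log (((2 * k).factorial : ℝ) / (2 ^ k * (k.factorial : ℝ)))

lemma D_pos (k : ℕ) : (0:ℝ) < ((2 * k).factorial : ℝ) / (2 ^ k * (k.factorial : ℝ)) := by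
  positivity

lemma normalNorm_pos (k : ℕ) : 0 < normalNorm k := Real.rpow_pos_of_pos (D_pos k) _

lemma c₁_pos {k : ℕ} (hk : 1 ≤ k) : 0 < c₁ k := by
  have hk' : (1:ℝ) ≤ (k:ℝ) := by exact_mod_cast hk
  have : (0:ℝ) < 2 * (k:ℝ) - 1 := by linarith
  exact div_pos (Real.sqrt_pos.2 this) (normalNorm_pos k)

lemma log_c₁ {k : ℕ} (hk : 1 ≤ k) : Real.log (c₁ k) = Laux k / (2 * k) := by
  have hk' : (1:ℝ) ≤ (k:ℝ) := by exact_mod_cast hk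
  have hk0 : (k:ℝ) ≠ 0 := by linarith
  have h1 : (0:ℝ) < 2 * (k:ℝ) - 1 := by linarith
  rw [c₁, normalNorm,
    Real.log_div (Real.sqrt_pos.2 h1).ne' (Real.rpow_pos_of_pos (D_pos k) _).ne',
    Real.log_rpow (D_pos k), Real.log_sqrt h1.le, Laux]
  field_simp

lemma D_succ (k : ℕ) :
    (((2 * (k+1)).factorial : ℝ) / (2 ^ (k+1) * ((k+1).factorial : ℝ)))
      = (2 * (k:ℝ) + 1) * (((2 * k).factorial : ℝ) / (2 ^ k * (k.factorial : ℝ))) := by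
  have h1 : 2 * (k + 1) = (2 * k + 1) + 1 := by ring
  rw [h1, Nat.factorial_succ, Nat.factorial_succ, Nat.factorial_succ]
  have hf : ((k.factorial : ℝ)) ≠ 0 := by positivity
  have hf2 : (((2*k).factorial : ℝ)) ≠ 0 := by positivity
  push_cast
  field_simp
  ring

lemma Laux_succ (k : ℕ) :
    Laux (k + 1) = Laux k + k * (Real.log (2*(k:ℝ)+1) - Real.log (2*(k:ℝ)-1)) := by
  have hb : (0:ℝ) < 2*(k:ℝ)+1 := by positivity
  rw [Laux, Laux, D_succ, Real.log_mul hb.ne' (D_pos k).ne']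
  push_cast
  have : 2 * ((k:ℝ) + 1) - 1 = 2*(k:ℝ) + 1 := by ring
  rw [this]
  ring

lemma Laux_one : Laux 1 = 0 := by
  simp only [Laux]
  norm_num [Nat.factorial]

lemma Laux_bounds {k : ℕ} (hk : 1 ≤ k) :
    ((k:ℝ) - 1) ≤ Laux k ∧ Laux k ≤ (k:ℝ) - 1/2 - 1/(2*(2*(k:ℝ)-1)) := by
  induction k, hk using Nat.le_induction with
  | base => rw [Laux_one]; norm_num
  | succ n hn ih =>
    have hn' : (1:ℝ) ≤ (n:ℝ) := by exact_mod_cast hn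
    obtain ⟨lo, hi⟩ := ih
    obtain ⟨tlo, thi⟩ := term_bounds hn'
    rw [Laux_succ]
    push_cast
    constructor
    · nlinarith
    · have h1 : (0:ℝ) < 2*(n:ℝ) - 1 := by linarith
      have h2 : (0:ℝ) < 2*(n:ℝ) + 1 := by linarith
      have he : 2 * ((n:ℝ)+1) - 1 = 2*(n:ℝ)+1 := by ring
      rw [he]
      have e1 : (1:ℝ)/(2*(2*(n:ℝ)-1)) = 1/2 * (1/(2*(n:ℝ)-1)) := by
        rw [one_div, mul_inv, one_div]; norm_num
      have e2 : (1:ℝ)/(2*(2*(n:ℝ)+1)) = 1/2 * (1/(2*(n:ℝ)+1)) := by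
        rw [one_div, mul_inv, one_div]; norm_num
      linarith

lemma c₁_lt_succ {k : ℕ} (hk : 1 ≤ k) : c₁ k < c₁ (k + 1) := by
  have hk' : (1:ℝ) ≤ (k:ℝ) := by exact_mod_cast hk
  have h1 := c₁_pos hk
  have h2 := c₁_pos (le_trans hk (Nat.le_succ k))
  rw [← Real.exp_log h1, ← Real.exp_log h2, Real.exp_lt_exp]
  rw [log_c₁ hk, log_c₁ (le_trans hk (Nat.le_succ k)), Laux_succ]
  obtain ⟨lo, hi⟩ := Laux_bounds hk
  obtain ⟨tlo, _⟩ := term_bounds hk'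
  have hd1 : (0:ℝ) < 2 * (k:ℝ) := by linarith
  have hd2 : (0:ℝ) < 2 * ((k+1:ℕ):ℝ) := by positivity
  rw [div_lt_div_iff₀ hd1 hd2]
  push_cast
  have hpos : (0:ℝ) < 1/(2*(2*(k:ℝ)-1)) := by apply div_pos one_pos; linarith
  nlinarith

lemma c₁_strictMonoOn : StrictMonoOn c₁ (Set.Ici 1) := by
  intro a ha b hb hab
  have ha' : 1 ≤ a := ha
  clear hb
  induction b, hab using Nat.le_induction with
  | base => exact c₁_lt_succ ha'
  | succ n hn ih =>
    exact lt_trans ih (c₁_lt_succ (le_trans ha' (le_of_lt hn)))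

lemma c₁_one : c₁ 1 = 1 := by
  have : normalNorm 1 = 1 := by
    rw [normalNorm]
    norm_num [Nat.factorial]
  rw [c₁, this]
  norm_num

lemma c₁_tendsto : Tendsto c₁ atTop (nhds (Real.sqrt (Real.exp 1))) := by
  have hhalf : Tendsto (fun k : ℕ => Laux k / (2 * k)) atTop (nhds (1/2)) := by
    have hlo : Tendsto (fun k : ℕ => ((k:ℝ) - 1) / (2 * k)) atTop (nhds (1/2)) := by
      have h : Tendsto (fun k : ℕ => 1/2 - (1/2) * (1/(k:ℝ))) atTop (nhds (1/2)) := by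
        have := tendsto_one_div_atTop_nhds_zero_nat (𝕜 := ℝ)
        have h2 := (this.const_mul (1/2 : ℝ)).const_sub (1/2 : ℝ)
        simpa using h2
      apply h.congr'
      filter_upwards [eventually_ge_atTop 1] with k hk
      have hk0 : (k:ℝ) ≠ 0 := by positivity
      field_simp
      try ring
    have hhi : Tendsto (fun k : ℕ => ((k:ℝ) - 1/2) / (2 * k)) atTop (nhds (1/2)) := by
      have h : Tendsto (fun k : ℕ => 1/2 - (1/4) * (1/(k:ℝ))) atTop (nhds (1/2)) := by
        have := tendsto_one_div_atTop_nhds_zero_nat (𝕜 := ℝ)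
        have h2 := (this.const_mul (1/4 : ℝ)).const_sub (1/2 : ℝ)
        simpa using h2
      apply h.congr'
      filter_upwards [eventually_ge_atTop 1] with k hk
      have hk0 : (k:ℝ) ≠ 0 := by positivity
      field_simp
      try ring
    refine tendsto_of_tendsto_of_tendsto_of_le_of_le' hlo hhi ?_ ?_
    · filter_upwards [eventually_ge_atTop 1] with k hk
      have hk' : (1:ℝ) ≤ (k:ℝ) := by exact_mod_cast hk
      have hb := (Laux_bounds hk).1
      have hk' : (1:ℝ) ≤ (k:ℝ) := by exact_mod_cast hk
      have h2k : (0:ℝ) < 2 * (k:ℝ) := by linarith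
      exact div_le_div_of_nonneg_right hb h2k.le
    · filter_upwards [eventually_ge_atTop 1] with k hk
      have hb := (Laux_bounds hk).2
      have hk' : (1:ℝ) ≤ (k:ℝ) := by exact_mod_cast hk
      have h2k : (0:ℝ) < 2 * (k:ℝ) := by linarith
      have hb2 : Laux k ≤ (k:ℝ) - 1/2 := by
        have : (0:ℝ) < 1/(2*(2*(k:ℝ)-1)) := by apply div_pos one_pos; linarith
        linarith
      exact div_le_div_of_nonneg_right hb2 h2k.le
  have hexp : Tendsto (fun k : ℕ => Real.exp (Laux k / (2 * k))) atTop
      (nhds (Real.exp (1/2))) := (Real.continuous_exp.tendsto _).comp hhalf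
  have heq : Real.sqrt (Real.exp 1) = Real.exp (1/2) := by
    have h : Real.exp (1/2) * Real.exp (1/2) = Real.exp 1 := by
      rw [← Real.exp_add]; norm_num
    rw [← h, Real.sqrt_mul_self (Real.exp_pos _).le]
  rw [heq]
  apply hexp.congr'
  filter_upwards [eventually_ge_atTop 1] with k hk
  rw [← log_c₁ hk, Real.exp_log (c₁_pos hk)]

/-- **Lemma 1**: `c₁` is (strictly) increasing in `k ≥ 1`, with `c₁(1) = 1` and
`c₁(k) → √e` as `k → ∞`. -/
theorem stmt_4 :
    StrictMonoOn c₁ (Set.Ici 1) ∧ c₁ 1 = 1 ∧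
      Tendsto c₁ atTop (nhds (Real.sqrt (Real.exp 1))) :=
  ⟨c₁_strictMonoOn, c₁_one, c₁_tendsto⟩
end

section
/- Let a > 1 and b, c > 0, and let X be a real random variable such that P(|X| > x) ≤ c·e^{−b(log(x+1))^a} for all x ≥ 0. Then there exist constants C₁(a,b) and C₂(a,b), depending only on a and b, such that for every positive integer k, E|X|^{2k} ≤ c·C₁(a,b)·k^{a/(2(a−1))}·exp{C₂(a,b)·k^{a/(a−1)}}. -/
open MeasureTheory Real

set_option maxHeartbeats 1000000 in
/-- **Lemma 2, second part**: a log-Weibull tail bound yields moment bounds with constants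
depending only on `a` and `b`. -/
theorem stmt_6 (a b : ℝ) (ha : 1 < a) (hb : 0 < b) :
    ∃ C₁ C₂ : ℝ, 0 < C₁ ∧ 0 < C₂ ∧
      ∀ (c : ℝ), 0 < c →
      ∀ {Ω : Type} [MeasurableSpace Ω] (P : Measure Ω), IsProbabilityMeasure P →
      ∀ (X : Ω → ℝ), Measurable X →
      (∀ x : ℝ, 0 ≤ x →
        P {ω | x < |X ω|} ≤ ENNReal.ofReal (c * Real.exp (-b * (Real.log (x + 1)) ^ a))) →
      ∀ (k : ℕ), 1 ≤ k →
        ∫⁻ ω, ENNReal.ofReal (|X ω| ^ (2 * k)) ∂P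
          ≤ ENNReal.ofReal (c * C₁ * (k : ℝ) ^ (a / (2 * (a - 1)))
              * Real.exp (C₂ * (k : ℝ) ^ (a / (a - 1)))) := by
  have ha1 : 0 < a - 1 := by linarith
  set β : ℝ := (a - 1)⁻¹ with hβdef
  have hβ : 0 < β := inv_pos.mpr ha1
  refine ⟨3, 2 * (4 / b) ^ β + 2, by norm_num, by positivity, ?_⟩
  intro c hc Ω _ P hP X hX htail k hk
  have hk1 : (1 : ℝ) ≤ (k : ℝ) := by exact_mod_cast hk
  have hkpos : (0 : ℝ) < (k : ℝ) := by linarith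
  set m : ℝ := (4 * k / b) ^ β with hm_def
  have hm : 0 < m := Real.rpow_pos_of_pos (by positivity) β
  set M : ℝ := Real.exp m with hM_def
  have hM1 : 1 < M := by
    rw [hM_def]; nlinarith [Real.add_one_lt_exp hm.ne']
  have hMpos : 0 < M := by linarith
  -- measurable sets
  have hs0 : MeasurableSet {ω | 0 < |X ω|} := measurableSet_lt measurable_const hX.abs
  have hsj : ∀ j : ℕ, MeasurableSet {ω | M * Real.exp (j : ℝ) < |X ω|} := fun j =>
    measurableSet_lt measurable_const hX.abs
  -- pointwise bound
  have key : ∀ ω, ENNReal.ofReal (|X ω| ^ (2 * k)) ≤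
      Set.indicator {ω | 0 < |X ω|} (fun _ => ENNReal.ofReal (M ^ (2 * k))) ω
      + ∑' j : ℕ, Set.indicator {ω | M * Real.exp (j : ℝ) < |X ω|}
          (fun _ => ENNReal.ofReal ((M * Real.exp ((j : ℝ) + 1)) ^ (2 * k))) ω := by
    intro ω
    have hx0 : 0 ≤ |X ω| := abs_nonneg _
    rcases eq_or_lt_of_le hx0 with h0 | h0
    · have : |X ω| ^ (2 * k) = 0 := by
        rw [← h0]; exact zero_pow (by omega)
      simp [this]
    rcases le_or_gt (|X ω|) M with hxM | hxM
    · refine le_trans ?_ le_self_add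
      rw [Set.indicator_of_mem (show ω ∈ {ω | 0 < |X ω|} from h0)]
      exact ENNReal.ofReal_le_ofReal (pow_le_pow_left₀ hx0 hxM _)
    · set t := Real.log (|X ω| / M) with ht_def
      have ht : 0 < t := Real.log_pos ((one_lt_div hMpos).mpr hxM)
      have hceil : 1 ≤ ⌈t⌉₊ := Nat.one_le_ceil_iff.mpr ht
      set J : ℕ := ⌈t⌉₊ - 1 with hJ_def
      have hJ1 : (J : ℝ) + 1 = (⌈t⌉₊ : ℝ) := by
        rw [hJ_def]; push_cast [hceil]; ring
      have hJlt : (J : ℝ) < t := by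
        have := Nat.ceil_lt_add_one ht.le
        linarith
      have htJ : t ≤ (J : ℝ) + 1 := by rw [hJ1]; exact Nat.le_ceil t
      have hexp : Real.exp t = |X ω| / M := Real.exp_log (by positivity)
      have hxlow : M * Real.exp (J : ℝ) < |X ω| := by
        have h2 : Real.exp (J : ℝ) < |X ω| / M := by
          rw [← hexp]; exact Real.exp_lt_exp.mpr hJlt
        calc M * Real.exp (J : ℝ) < M * (|X ω| / M) :=
              mul_lt_mul_of_pos_left h2 hMpos
          _ = |X ω| := by field_simp
      have hxhigh : |X ω| ≤ M * Real.exp ((J : ℝ) + 1) := by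
        have h2 : |X ω| / M ≤ Real.exp ((J : ℝ) + 1) := by
          rw [← hexp]; exact Real.exp_le_exp.mpr htJ
        calc |X ω| = M * (|X ω| / M) := by field_simp
          _ ≤ M * Real.exp ((J : ℝ) + 1) := mul_le_mul_of_nonneg_left h2 hMpos.le
      refine le_trans ?_ le_add_self
      refine le_trans ?_ (ENNReal.le_tsum J)
      rw [Set.indicator_of_mem (show ω ∈ {ω | M * Real.exp (J : ℝ) < |X ω|} from hxlow)]
      exact ENNReal.ofReal_le_ofReal (pow_le_pow_left₀ hx0 hxhigh _)
  -- integrate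
  have hint : ∫⁻ ω, ENNReal.ofReal (|X ω| ^ (2 * k)) ∂P ≤
      ENNReal.ofReal (M ^ (2 * k)) * P {ω | 0 < |X ω|}
      + ∑' j : ℕ, ENNReal.ofReal ((M * Real.exp ((j : ℝ) + 1)) ^ (2 * k))
          * P {ω | M * Real.exp (j : ℝ) < |X ω|} := by
    calc ∫⁻ ω, ENNReal.ofReal (|X ω| ^ (2 * k)) ∂P
        ≤ ∫⁻ ω, (Set.indicator {ω | 0 < |X ω|} (fun _ => ENNReal.ofReal (M ^ (2 * k))) ω
            + ∑' j : ℕ, Set.indicator {ω | M * Real.exp (j : ℝ) < |X ω|}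
              (fun _ => ENNReal.ofReal ((M * Real.exp ((j : ℝ) + 1)) ^ (2 * k))) ω) ∂P :=
          lintegral_mono key
      _ = (∫⁻ ω, Set.indicator {ω | 0 < |X ω|}
              (fun _ => ENNReal.ofReal (M ^ (2 * k))) ω ∂P)
          + ∫⁻ ω, (∑' j : ℕ, Set.indicator {ω | M * Real.exp (j : ℝ) < |X ω|}
              (fun _ => ENNReal.ofReal ((M * Real.exp ((j : ℝ) + 1)) ^ (2 * k))) ω) ∂P :=
          lintegral_add_left (measurable_const.indicator hs0) _
      _ = ENNReal.ofReal (M ^ (2 * k)) * P {ω | 0 < |X ω|}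
          + ∑' j : ℕ, ENNReal.ofReal ((M * Real.exp ((j : ℝ) + 1)) ^ (2 * k))
              * P {ω | M * Real.exp (j : ℝ) < |X ω|} := by
          rw [lintegral_indicator_const hs0,
            lintegral_tsum (fun j => (measurable_const.indicator (hsj j)).aemeasurable)]
          congr 1
          exact tsum_congr fun j => lintegral_indicator_const (hsj j) _
  -- tail bounds
  have hP0 : P {ω | 0 < |X ω|} ≤ ENNReal.ofReal c := by
    have h := htail 0 le_rfl
    simpa [Real.log_one, Real.zero_rpow (by linarith : a ≠ 0), Real.exp_zero] using h
  have hPj : ∀ j : ℕ, P {ω | M * Real.exp (j : ℝ) < |X ω|}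
      ≤ ENNReal.ofReal (c * Real.exp (-b * (m + (j : ℝ)) ^ a)) := by
    intro j
    refine le_trans (htail _ (by positivity)) (ENNReal.ofReal_le_ofReal ?_)
    have h1 : M * Real.exp (j : ℝ) = Real.exp (m + (j : ℝ)) := by
      rw [Real.exp_add]
    have hL : m + (j : ℝ) ≤ Real.log (M * Real.exp (j : ℝ) + 1) := by
      calc m + (j : ℝ) = Real.log (M * Real.exp (j : ℝ)) := by rw [h1, Real.log_exp]
        _ ≤ Real.log (M * Real.exp (j : ℝ) + 1) :=
            Real.log_le_log (by positivity) (by linarith)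
    have h2 : (m + (j : ℝ)) ^ a ≤ Real.log (M * Real.exp (j : ℝ) + 1) ^ a :=
      Real.rpow_le_rpow (by positivity) hL (by linarith)
    have h3 : -b * Real.log (M * Real.exp (j : ℝ) + 1) ^ a ≤ -b * (m + (j : ℝ)) ^ a := by
      nlinarith
    exact mul_le_mul_of_nonneg_left (Real.exp_le_exp.mpr h3) hc.le
  -- real-number estimates on the summands
  have hbm : b * m ^ (a - 1) = 4 * (k : ℝ) := by
    have h1 : ((4 * (k : ℝ) / b) ^ β) ^ (a - 1) = 4 * (k : ℝ) / b := by
      rw [← Real.rpow_mul (by positivity), hβdef, inv_mul_cancel₀ ha1.ne', Real.rpow_one]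
    rw [hm_def, h1]
    field_simp
  have hterm : ∀ j : ℕ, (M * Real.exp ((j : ℝ) + 1)) ^ (2 * k)
      * (c * Real.exp (-b * (m + (j : ℝ)) ^ a))
      ≤ c * Real.exp (2 * k) * Real.exp (-2) ^ j := by
    intro j
    have hj0 : (0 : ℝ) ≤ (j : ℝ) := j.cast_nonneg
    have h1 : (M * Real.exp ((j : ℝ) + 1)) ^ (2 * k)
        = Real.exp ((2 * k : ℕ) * (m + ((j : ℝ) + 1))) := by
      rw [← Real.exp_add, Real.exp_nat_mul]
    have hpow : 4 * (k : ℝ) * (m + j) ≤ b * (m + (j : ℝ)) ^ a := by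
      have h2 : m ^ (a - 1) ≤ (m + (j : ℝ)) ^ (a - 1) :=
        Real.rpow_le_rpow hm.le (by linarith) (by linarith)
      have h3 : (m + (j : ℝ)) ^ a = (m + (j : ℝ)) ^ (a - 1) * (m + (j : ℝ)) := by
        calc (m + (j : ℝ)) ^ a = (m + (j : ℝ)) ^ ((a - 1) + 1) := by ring_nf
          _ = (m + (j : ℝ)) ^ (a - 1) * (m + (j : ℝ)) :=
              Real.rpow_add_one (by positivity) _
      calc 4 * (k : ℝ) * (m + j) = b * m ^ (a - 1) * (m + j) := by rw [hbm]
        _ ≤ b * (m + (j : ℝ)) ^ (a - 1) * (m + j) :=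
            mul_le_mul_of_nonneg_right (mul_le_mul_of_nonneg_left h2 hb.le) (by positivity)
        _ = b * (m + (j : ℝ)) ^ a := by rw [h3]; ring
    have hE : (2 * k : ℕ) * (m + ((j : ℝ) + 1)) + (-b * (m + (j : ℝ)) ^ a)
        ≤ 2 * k + (-2) * j := by
      push_cast
      nlinarith [hm.le, hj0, hpow, mul_nonneg (by linarith : (0:ℝ) ≤ (k:ℝ) - 1) hj0,
        mul_nonneg hkpos.le hm.le]
    calc (M * Real.exp ((j : ℝ) + 1)) ^ (2 * k) * (c * Real.exp (-b * (m + (j : ℝ)) ^ a))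
        = c * Real.exp ((2 * k : ℕ) * (m + ((j : ℝ) + 1)) + (-b * (m + (j : ℝ)) ^ a)) := by
          rw [h1, Real.exp_add]; ring
      _ ≤ c * Real.exp (2 * k + (-2) * j) :=
          mul_le_mul_of_nonneg_left (Real.exp_le_exp.mpr hE) hc.le
      _ = c * Real.exp (2 * k) * Real.exp (-2) ^ j := by
          rw [Real.exp_add, ← Real.exp_nat_mul]; ring_nf
  -- summability and sum of the geometric bound
  have hgeolt : Real.exp (-2) < 1 := Real.exp_lt_one_iff.mpr (by norm_num)
  have hsumv : Summable (fun j : ℕ => c * Real.exp (2 * k) * Real.exp (-2) ^ j) :=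
    (summable_geometric_of_lt_one (Real.exp_nonneg _) hgeolt).mul_left _
  have htsumv : ∑' j : ℕ, c * Real.exp (2 * k) * Real.exp (-2) ^ j
      = c * Real.exp (2 * k) * (1 - Real.exp (-2))⁻¹ := by
    rw [tsum_mul_left, tsum_geometric_of_lt_one (Real.exp_nonneg _) hgeolt]
  -- assemble
  have hsum_le : (∑' j : ℕ, ENNReal.ofReal ((M * Real.exp ((j : ℝ) + 1)) ^ (2 * k))
        * P {ω | M * Real.exp (j : ℝ) < |X ω|})
      ≤ ENNReal.ofReal (c * Real.exp (2 * k) * (1 - Real.exp (-2))⁻¹) := by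
    calc (∑' j : ℕ, ENNReal.ofReal ((M * Real.exp ((j : ℝ) + 1)) ^ (2 * k))
          * P {ω | M * Real.exp (j : ℝ) < |X ω|})
        ≤ ∑' j : ℕ, ENNReal.ofReal ((M * Real.exp ((j : ℝ) + 1)) ^ (2 * k))
            * ENNReal.ofReal (c * Real.exp (-b * (m + (j : ℝ)) ^ a)) :=
          ENNReal.tsum_le_tsum fun j => mul_le_mul_of_nonneg_left (hPj j) (by simp)
      _ ≤ ∑' j : ℕ, ENNReal.ofReal (c * Real.exp (2 * k) * Real.exp (-2) ^ j) := by
          refine ENNReal.tsum_le_tsum fun j => ?_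
          rw [← ENNReal.ofReal_mul (by positivity)]
          exact ENNReal.ofReal_le_ofReal (hterm j)
      _ = ENNReal.ofReal (c * Real.exp (2 * k) * (1 - Real.exp (-2))⁻¹) := by
          rw [← ENNReal.ofReal_tsum_of_nonneg (fun j => by positivity) hsumv, htsumv]
  have hfinal : M ^ (2 * k) * c + c * Real.exp (2 * k) * (1 - Real.exp (-2))⁻¹
      ≤ c * 3 * (k : ℝ) ^ (a / (2 * (a - 1)))
        * Real.exp ((2 * (4 / b) ^ β + 2) * (k : ℝ) ^ (a / (a - 1))) := by
    have hkab : (k : ℝ) ^ (a / (a - 1)) = (k : ℝ) * (k : ℝ) ^ β := by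
      have hexp : a / (a - 1) = 1 + β := by
        rw [hβdef]; field_simp; ring
      rw [hexp, Real.rpow_add hkpos, Real.rpow_one]
    have hmsplit : m = (4 / b) ^ β * (k : ℝ) ^ β := by
      rw [hm_def, show 4 * (k : ℝ) / b = (4 / b) * k by ring,
        Real.mul_rpow (by positivity) hkpos.le]
    have hkk : (k : ℝ) ≤ (k : ℝ) ^ (a / (a - 1)) := by
      calc (k : ℝ) = (k : ℝ) ^ (1 : ℝ) := (Real.rpow_one _).symm
        _ ≤ (k : ℝ) ^ (a / (a - 1)) :=
            Real.rpow_le_rpow_of_exponent_le hk1 (by rw [le_div_iff₀ ha1]; linarith)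
    have h2km : 2 * (k : ℝ) * m + 2 * k ≤ (2 * (4 / b) ^ β + 2) * (k : ℝ) ^ (a / (a - 1)) := by
      have hmm : 2 * (k : ℝ) * m = 2 * (4 / b) ^ β * (k : ℝ) ^ (a / (a - 1)) := by
        rw [hmsplit, hkab]; ring
      nlinarith [Real.rpow_pos_of_pos (show (0:ℝ) < 4 / b by positivity) β]
    have hMk : M ^ (2 * k) = Real.exp (2 * (k : ℝ) * m) := by
      rw [hM_def, ← Real.exp_nat_mul]
      congr 1
      push_cast; ring
    set E : ℝ := (2 * (4 / b) ^ β + 2) * (k : ℝ) ^ (a / (a - 1)) with hE_def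
    have he1 : Real.exp (2 * (k : ℝ) * m) ≤ Real.exp E :=
      Real.exp_le_exp.mpr (by linarith)
    have he2 : Real.exp (2 * (k : ℝ)) ≤ Real.exp E :=
      Real.exp_le_exp.mpr (by linarith [mul_nonneg hkpos.le hm.le])
    have h12 : Real.exp (-2) ≤ 1 / 2 := by
      have h2 : (3 : ℝ) < Real.exp 2 := by
        nlinarith [Real.add_one_lt_exp (two_ne_zero (α := ℝ))]
      rw [Real.exp_neg]
      calc (Real.exp 2)⁻¹ ≤ ((2:ℝ))⁻¹ := inv_anti₀ (by norm_num) (by linarith)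
        _ = 1 / 2 := by norm_num
    have hgeo : (1 - Real.exp (-2))⁻¹ ≤ 2 := by
      calc (1 - Real.exp (-2))⁻¹ ≤ ((1:ℝ)/2)⁻¹ := inv_anti₀ (by norm_num) (by linarith)
        _ = 2 := by norm_num
    have hgeo0 : (0:ℝ) ≤ (1 - Real.exp (-2))⁻¹ := inv_nonneg.mpr (by linarith)
    have hk2 : 1 ≤ (k : ℝ) ^ (a / (2 * (a - 1))) := Real.one_le_rpow hk1 (by positivity)
    have hstep1 : M ^ (2 * k) * c ≤ c * Real.exp E := by
      rw [hMk]
      nlinarith [mul_le_mul_of_nonneg_left he1 hc.le]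
    have hstep2 : c * Real.exp (2 * k) * (1 - Real.exp (-2))⁻¹ ≤ 2 * (c * Real.exp E) := by
      have h1 : c * Real.exp (2 * k) ≤ c * Real.exp E := by
        have : Real.exp (2 * (k:ℕ) : ℝ) = Real.exp (2 * (k:ℝ)) := by push_cast; ring_nf
        nlinarith [mul_le_mul_of_nonneg_left he2 hc.le]
      calc c * Real.exp (2 * k) * (1 - Real.exp (-2))⁻¹
          ≤ (c * Real.exp E) * 2 :=
            mul_le_mul h1 hgeo hgeo0 (by positivity)
        _ = 2 * (c * Real.exp E) := by ring
    have hlast : (0:ℝ) ≤ c * ((k : ℝ) ^ (a / (2 * (a - 1))) - 1) * Real.exp E :=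
      mul_nonneg (mul_nonneg hc.le (by linarith)) (Real.exp_pos _).le
    nlinarith [hstep1, hstep2, hlast]
  calc ∫⁻ ω, ENNReal.ofReal (|X ω| ^ (2 * k)) ∂P
      ≤ ENNReal.ofReal (M ^ (2 * k)) * P {ω | 0 < |X ω|}
        + ∑' j : ℕ, ENNReal.ofReal ((M * Real.exp ((j : ℝ) + 1)) ^ (2 * k))
            * P {ω | M * Real.exp (j : ℝ) < |X ω|} := hint
    _ ≤ ENNReal.ofReal (M ^ (2 * k)) * ENNReal.ofReal c
        + ENNReal.ofReal (c * Real.exp (2 * k) * (1 - Real.exp (-2))⁻¹) :=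
        add_le_add (mul_le_mul_of_nonneg_left hP0 (by simp)) hsum_le
    _ = ENNReal.ofReal (M ^ (2 * k) * c + c * Real.exp (2 * k) * (1 - Real.exp (-2))⁻¹) := by
        rw [← ENNReal.ofReal_mul (pow_nonneg hMpos.le _),
          ← ENNReal.ofReal_add (by positivity) ?_]
        have h12 : Real.exp (-2) ≤ 1 / 2 := by
          have h2 : (3 : ℝ) < Real.exp 2 := by
            nlinarith [Real.add_one_lt_exp (two_ne_zero (α := ℝ))]
          rw [Real.exp_neg]
          calc (Real.exp 2)⁻¹ ≤ ((2:ℝ))⁻¹ := inv_anti₀ (by norm_num) (by linarith)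
            _ = 1 / 2 := by norm_num
        have : (0:ℝ) ≤ (1 - Real.exp (-2))⁻¹ := inv_nonneg.mpr (by linarith)
        positivity
    _ ≤ ENNReal.ofReal (c * 3 * (k : ℝ) ^ (a / (2 * (a - 1)))
          * Real.exp ((2 * (4 / b) ^ β + 2) * (k : ℝ) ^ (a / (a - 1)))) :=
        ENNReal.ofReal_le_ofReal hfinal
end

section
/- Let X₁, …, X_n be real random variables with mean zero and E|X_i|^{2k} < ∞ for all i, for a fixed positive integer k, and suppose that for each i there is a set 𝒩_i ⊆ {1,…,n} with i ∈ 𝒩_i such that X_i is independent of W − Σ_{j∈𝒩_i} X_j, where W := Σ_{i=1}^n X_i. Let d := max_i |𝒩_i| and x := max_i ‖X_i‖_{2k}. Then ‖W‖_{2k} ≤ n x·[(1 + √(d/(n(2k−1))))^{2k−1} − 1] ≤ √n·x·√(d(2k−1))·exp{√(d(2k−1)/n)}. -/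
open MeasureTheory ProbabilityTheory Real
open scoped ENNReal NNReal
set_option linter.unusedSectionVars false

/-- `(E |X|^r)^(1/r)`, the `r`-norm of a real random variable. -/
noncomputable def rnorm {Ω : Type*} [MeasurableSpace Ω] (P : Measure Ω) (X : Ω → ℝ) (r : ℕ) : ℝ :=
  (∫ ω, |X ω| ^ r ∂P) ^ ((r : ℝ)⁻¹)

namespace Stmt13Aux

variable {Ω : Type*} [MeasurableSpace Ω] (P : Measure Ω) [IsProbabilityMeasure P]

lemma rnorm_nonneg (f : Ω → ℝ) (r : ℕ) : 0 ≤ rnorm P f r :=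
  Real.rpow_nonneg (integral_nonneg fun ω => by positivity) _

lemma rnorm_pow_eq {m : ℕ} (hm : m ≠ 0) (f : Ω → ℝ) :
    rnorm P f m ^ m = ∫ ω, |f ω| ^ m ∂P :=
  Real.rpow_inv_natCast_pow (integral_nonneg fun ω => by positivity) hm

lemma rnorm_neg (f : Ω → ℝ) (r : ℕ) :
    rnorm P (fun ω => -f ω) r = rnorm P f r := by
  unfold rnorm; simp

/-- real pow-rpow identity -/
lemma abs_pow_rpow (t : ℝ) {m : ℕ} (a : ℕ) (hm : m ≠ 0) :
    (|t| ^ m) ^ ((a : ℝ) / m) = |t| ^ a := by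
  have h : ((m : ℝ)) * ((a : ℝ) / m) = (a : ℝ) := by
    field_simp
  rw [← Real.rpow_natCast_mul (abs_nonneg t), h, Real.rpow_natCast]

lemma ofReal_abs_pow_rpow (t : ℝ) {m : ℕ} (a : ℕ) (hm : m ≠ 0) :
    (ENNReal.ofReal (|t| ^ m)) ^ ((a : ℝ) / m) = ENNReal.ofReal (|t| ^ a) := by
  rw [ENNReal.ofReal_rpow_of_nonneg (by positivity) (by positivity), abs_pow_rpow t a hm]

lemma ofReal_integral_rpow {m : ℕ} (hm : m ≠ 0) (f : Ω → ℝ) (a : ℕ) :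
    (ENNReal.ofReal (∫ ω, |f ω| ^ m ∂P)) ^ ((a : ℝ) / m)
      = ENNReal.ofReal (rnorm P f m ^ a) := by
  have hI : (0:ℝ) ≤ ∫ ω, |f ω| ^ m ∂P := integral_nonneg fun ω => by positivity
  rw [ENNReal.ofReal_rpow_of_nonneg hI (by positivity)]
  congr 1
  rw [← Real.rpow_natCast (rnorm P f m) a]
  unfold rnorm
  rw [← Real.rpow_mul hI]
  congr 1
  rw [inv_mul_eq_div]

lemma lint_ofReal_eq {m : ℕ} (f : Ω → ℝ) (hfi : Integrable (fun ω => |f ω| ^ m) P) :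
    ∫⁻ ω, ENNReal.ofReal (|f ω| ^ m) ∂P = ENNReal.ofReal (∫ ω, |f ω| ^ m ∂P) :=
  (ofReal_integral_eq_lintegral_ofReal hfi
    (Filter.Eventually.of_forall fun ω => by positivity)).symm

section Holder

variable {f g h : Ω → ℝ} {m b c : ℕ}

/-- Hölder-type integrability: product of functions in `L^m` with total degree `m`. -/
lemma holder_int3 (hm : m ≠ 0) (hbc : 1 + b + c = m)
    (hfm : Measurable f) (hgm : Measurable g) (hhm : Measurable h)
    (hfi : Integrable (fun ω => |f ω| ^ m) P)
    (hgi : Integrable (fun ω => |g ω| ^ m) P)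
    (hhi : Integrable (fun ω => |h ω| ^ m) P) :
    Integrable (fun ω => |f ω| * |g ω| ^ b * |h ω| ^ c) P := by
  have hmR : (0:ℝ) < m := by
    have := Nat.pos_of_ne_zero hm; exact_mod_cast this
  refine Integrable.mono'
    (g := fun ω => (1:ℝ)/m * |f ω| ^ m + (b:ℝ)/m * |g ω| ^ m + (c:ℝ)/m * |h ω| ^ m)
    (((hfi.const_mul _).add (hgi.const_mul _)).add (hhi.const_mul _)) ?_ ?_
  · exact (((hfm.abs.pow_const 1).mul (hgm.abs.pow_const b)).mul
      (hhm.abs.pow_const c)).aestronglyMeasurable.congr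
      (Filter.Eventually.of_forall fun ω => by simp)
  · refine Filter.Eventually.of_forall fun ω => ?_
    rw [Real.norm_eq_abs, abs_of_nonneg (by positivity)]
    have hw : (1:ℝ)/m + (b:ℝ)/m + (c:ℝ)/m = 1 := by
      rw [← add_div, ← add_div]
      rw [show (1:ℝ) + (b:ℝ) + (c:ℝ) = ((1 + b + c : ℕ) : ℝ) by push_cast; ring, hbc,
        div_self hmR.ne']
    have := Real.geom_mean_le_arith_mean3_weighted
      (by positivity) (by positivity) (by positivity)
      (by positivity : (0:ℝ) ≤ |f ω| ^ m) (by positivity : (0:ℝ) ≤ |g ω| ^ m)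
      (by positivity : (0:ℝ) ≤ |h ω| ^ m) hw
    calc |f ω| * |g ω| ^ b * |h ω| ^ c
        = (|f ω| ^ m) ^ ((1:ℕ) / (m:ℝ)) * (|g ω| ^ m) ^ ((b:ℝ)/m) * (|h ω| ^ m) ^ ((c:ℝ)/m) := by
          rw [abs_pow_rpow _ 1 hm, abs_pow_rpow _ b hm, abs_pow_rpow _ c hm, pow_one]
      _ ≤ (1:ℝ)/m * |f ω| ^ m + (b:ℝ)/m * |g ω| ^ m + (c:ℝ)/m * |h ω| ^ m := by
          simpa using this

lemma holder_int3' (hm : m ≠ 0) (hbc : 1 + b + c = m)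
    (hfm : Measurable f) (hgm : Measurable g) (hhm : Measurable h)
    (hfi : Integrable (fun ω => |f ω| ^ m) P)
    (hgi : Integrable (fun ω => |g ω| ^ m) P)
    (hhi : Integrable (fun ω => |h ω| ^ m) P) :
    Integrable (fun ω => f ω * g ω ^ b * h ω ^ c) P := by
  refine (holder_int3 P hm hbc hfm hgm hhm hfi hgi hhi).mono'
    (((hfm.mul (hgm.pow_const b)).mul (hhm.pow_const c)).aestronglyMeasurable)
    (Filter.Eventually.of_forall fun ω => ?_)
  rw [Real.norm_eq_abs, abs_mul, abs_mul, abs_pow, abs_pow]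

/-- Hölder inequality for a triple product with total degree `m`, probability measure. -/
lemma holder_le3 (hm : m ≠ 0) (hbc : 1 + b + c = m)
    (hfm : Measurable f) (hgm : Measurable g) (hhm : Measurable h)
    (hfi : Integrable (fun ω => |f ω| ^ m) P)
    (hgi : Integrable (fun ω => |g ω| ^ m) P)
    (hhi : Integrable (fun ω => |h ω| ^ m) P) :
    ∫ ω, |f ω| * |g ω| ^ b * |h ω| ^ c ∂P
      ≤ rnorm P f m * rnorm P g m ^ b * rnorm P h m ^ c := by
  have hmR : (0:ℝ) < m := by
    have := Nat.pos_of_ne_zero hm; exact_mod_cast this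
  set F : Fin 3 → Ω → ℝ≥0∞ := ![fun ω => ENNReal.ofReal (|f ω| ^ m),
    fun ω => ENNReal.ofReal (|g ω| ^ m), fun ω => ENNReal.ofReal (|h ω| ^ m)] with hF
  set w : Fin 3 → ℝ := ![(1:ℝ)/m, (b:ℝ)/m, (c:ℝ)/m] with hw
  have hsum : ∑ i : Fin 3, w i = 1 := by
    rw [Fin.sum_univ_three, hw]
    simp only [Matrix.cons_val_zero, Matrix.cons_val_one, Matrix.head_cons,
      Matrix.cons_val_two, Matrix.tail_cons]
    rw [← add_div, ← add_div]
    rw [show (1:ℝ) + (b:ℝ) + (c:ℝ) = ((1 + b + c : ℕ) : ℝ) by push_cast; ring, hbc,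
      div_self hmR.ne']
  have hkey := ENNReal.lintegral_prod_norm_pow_le (μ := P) (Finset.univ : Finset (Fin 3))
    (f := fun i => F i) (fun i _ => by
      fin_cases i <;> simp only [hF] <;> simp <;>
        first
          | exact ((ENNReal.measurable_ofReal.comp hfm.abs).pow_const m).aemeasurable
          | exact ((ENNReal.measurable_ofReal.comp hgm.abs).pow_const m).aemeasurable
          | exact ((ENNReal.measurable_ofReal.comp hhm.abs).pow_const m).aemeasurable)
    (p := w) hsum (fun i _ => by
      fin_cases i <;> simp only [hw] <;> simp <;> positivity)
  -- rewrite LHS of hkey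
  have hL : ∀ ω, ∏ i : Fin 3, F i ω ^ w i = ENNReal.ofReal (|f ω| * |g ω| ^ b * |h ω| ^ c) := by
    intro ω
    rw [Fin.prod_univ_three]
    simp only [hF, hw, Matrix.cons_val_zero, Matrix.cons_val_one, Matrix.head_cons,
      Matrix.cons_val_two, Matrix.tail_cons]
    rw [show ((1:ℝ)/m) = ((1:ℕ):ℝ)/m by norm_num,
      ofReal_abs_pow_rpow _ 1 hm, ofReal_abs_pow_rpow _ b hm, ofReal_abs_pow_rpow _ c hm,
      pow_one, ← ENNReal.ofReal_mul (abs_nonneg (f ω)),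
      ← ENNReal.ofReal_mul (by positivity : (0:ℝ) ≤ |f ω| * |g ω| ^ b)]
  have hR : ∏ i : Fin 3, (∫⁻ ω, F i ω ∂P) ^ w i
      = ENNReal.ofReal (rnorm P f m * rnorm P g m ^ b * rnorm P h m ^ c) := by
    rw [Fin.prod_univ_three]
    simp only [hF, hw, Matrix.cons_val_zero, Matrix.cons_val_one, Matrix.head_cons,
      Matrix.cons_val_two, Matrix.tail_cons]
    rw [lint_ofReal_eq P f hfi, lint_ofReal_eq P g hgi, lint_ofReal_eq P h hhi,
      show ((1:ℝ)/m) = ((1:ℕ):ℝ)/m by norm_num,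
      ofReal_integral_rpow P hm f 1, ofReal_integral_rpow P hm g b,
      ofReal_integral_rpow P hm h c, pow_one,
      ← ENNReal.ofReal_mul (rnorm_nonneg P f m),
      ← ENNReal.ofReal_mul (mul_nonneg (rnorm_nonneg P f m) (pow_nonneg (rnorm_nonneg P g m) b))]
  rw [lintegral_congr hL, hR] at hkey
  have hint : Integrable (fun ω => |f ω| * |g ω| ^ b * |h ω| ^ c) P :=
    holder_int3 P hm hbc hfm hgm hhm hfi hgi hhi
  have := (ofReal_integral_eq_lintegral_ofReal hint
    (Filter.Eventually.of_forall fun ω => by positivity)).trans_le hkey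
  have h2 := ENNReal.toReal_mono ENNReal.ofReal_ne_top this
  rw [ENNReal.toReal_ofReal (integral_nonneg fun ω => by positivity),
    ENNReal.toReal_ofReal (mul_nonneg (mul_nonneg (rnorm_nonneg P f m) (pow_nonneg (rnorm_nonneg P g m) b)) (pow_nonneg (rnorm_nonneg P h m) c))] at h2
  exact h2

end Holder

section MemLp

variable {f : Ω → ℝ} {m : ℕ}

lemma memLp_of (hm : m ≠ 0) (hfm : Measurable f)
    (hfi : Integrable (fun ω => |f ω| ^ m) P) : MemLp f (m : ℝ≥0∞) P := by
  have h0 : ((m : ℝ≥0∞)) ≠ 0 := by exact_mod_cast Nat.cast_ne_zero.mpr hm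
  have ht : ((m : ℝ≥0∞)) ≠ ∞ := ENNReal.natCast_ne_top m
  have H : MemLp (fun x => ‖f x‖ ^ ((m : ℝ≥0∞)).toReal) ((m : ℝ≥0∞) / (m : ℝ≥0∞)) P := by
    rw [ENNReal.div_self h0 ht, memLp_one_iff_integrable]
    refine hfi.congr (Filter.Eventually.of_forall fun ω => ?_)
    simp [ENNReal.toReal_natCast, Real.rpow_natCast]
  exact (memLp_norm_rpow_iff hfm.aestronglyMeasurable h0 ht).mp H

lemma int_pow_of (hm : m ≠ 0) (hf : MemLp f (m : ℝ≥0∞) P) :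
    Integrable (fun ω => |f ω| ^ m) P := by
  have := hf.integrable_norm_rpow (by exact_mod_cast Nat.cast_ne_zero.mpr hm)
    (ENNReal.natCast_ne_top m)
  refine this.congr (Filter.Eventually.of_forall fun ω => ?_)
  simp [ENNReal.toReal_natCast, Real.rpow_natCast]

lemma eLpNorm_eq_rnorm (hm : m ≠ 0) (hfm : Measurable f)
    (hfi : Integrable (fun ω => |f ω| ^ m) P) :
    eLpNorm f (m : ℝ≥0∞) P = ENNReal.ofReal (rnorm P f m) := by
  have h0 : ((m : ℝ≥0∞)) ≠ 0 := by exact_mod_cast Nat.cast_ne_zero.mpr hm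
  rw [eLpNorm_eq_lintegral_rpow_enorm_toReal h0 (ENNReal.natCast_ne_top m)]
  have hpt : ∀ ω, ‖f ω‖ₑ ^ ((m : ℝ≥0∞)).toReal = ENNReal.ofReal (|f ω| ^ m) := by
    intro ω
    rw [ENNReal.toReal_natCast, Real.enorm_eq_ofReal_abs,
      ENNReal.ofReal_rpow_of_nonneg (abs_nonneg _) (by positivity), Real.rpow_natCast]
  rw [lintegral_congr hpt, lint_ofReal_eq P f hfi, ENNReal.toReal_natCast, one_div,
    ENNReal.ofReal_rpow_of_nonneg (integral_nonneg fun ω => by positivity) (by positivity)]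
  rfl

lemma rnorm_sum_le {ι : Type*} (t : Finset ι) (g : ι → Ω → ℝ) {m : ℕ} (hm : 1 ≤ m)
    (hgm : ∀ i, Measurable (g i)) (hgi : ∀ i, Integrable (fun ω => |g i ω| ^ m) P) :
    rnorm P (fun ω => ∑ i ∈ t, g i ω) m ≤ ∑ i ∈ t, rnorm P (g i) m := by
  have hm0 : m ≠ 0 := by omega
  have hLp : ∀ i ∈ t, MemLp (g i) (m : ℝ≥0∞) P := fun i _ => memLp_of P hm0 (hgm i) (hgi i)
  have hsLp : MemLp (fun ω => ∑ i ∈ t, g i ω) (m : ℝ≥0∞) P := memLp_finsetSum t hLp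
  have hsm : Measurable (fun ω => ∑ i ∈ t, g i ω) :=
    Finset.measurable_sum t fun i _ => hgm i
  have hsi : Integrable (fun ω => |∑ i ∈ t, g i ω| ^ m) P := int_pow_of P hm0 hsLp
  have key : ENNReal.ofReal (rnorm P (fun ω => ∑ i ∈ t, g i ω) m)
      ≤ ENNReal.ofReal (∑ i ∈ t, rnorm P (g i) m) := by
    rw [← eLpNorm_eq_rnorm P hm0 hsm hsi]
    have h1 : eLpNorm (fun ω => ∑ i ∈ t, g i ω) (m : ℝ≥0∞) P
        = eLpNorm (∑ i ∈ t, g i) (m : ℝ≥0∞) P := by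
      congr 1; funext ω; simp
    rw [h1]
    refine le_trans (eLpNorm_sum_le (fun i _ => (hgm i).aestronglyMeasurable)
      (by exact_mod_cast Nat.one_le_cast.mpr hm)) ?_
    rw [ENNReal.ofReal_sum_of_nonneg fun i _ => rnorm_nonneg P (g i) m]
    exact Finset.sum_le_sum fun i hi => by
      rw [eLpNorm_eq_rnorm P hm0 (hgm i) (hgi i)]
  exact (ENNReal.ofReal_le_ofReal_iff (Finset.sum_nonneg fun i _ =>
    rnorm_nonneg P (g i) m)).mp key

end MemLp

/-- binomial expansion of `(u+v)^p - u^p`. -/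
lemma expand_pow (u v : ℝ) (p : ℕ) :
    (u + v) ^ p - u ^ p = ∑ j ∈ Finset.range p, u ^ j * v ^ (p - j) * (p.choose j : ℝ) := by
  rw [add_pow, Finset.sum_range_succ]
  simp

/-- The key deterministic step. -/
lemma detD {p : ℕ} (hp : 1 ≤ p) {N y s c : ℝ} (hN : 0 < N) (hy : 0 < y) (hs : 0 ≤ s)
    (hc : c = Real.sqrt (y / (N * p)))
    (hkey : s ^ (p + 1) ≤ N * ((s + y) ^ p - s ^ p)) :
    s ≤ N * ((1 + c) ^ p - 1) := by
  have hpR : (0:ℝ) < p := by exact_mod_cast hp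
  have hc0 : 0 < c := by
    rw [hc]; exact Real.sqrt_pos.mpr (by positivity)
  have hcsq : c ^ 2 = y / (N * p) := by
    rw [hc, Real.sq_sqrt (by positivity : (0:ℝ) ≤ y / (N * p))]
  have hyeq : y = N * p * c ^ 2 := by
    rw [hcsq]; field_simp
  set s₀ : ℝ := N * ((1 + c) ^ p - 1) with hs₀
  have hbern : 1 + (p : ℝ) * c ≤ (1 + c) ^ p := one_add_mul_le_pow (by linarith) p
  have hs₀ge : N * p * c ≤ s₀ := by
    rw [hs₀]
    have : (p : ℝ) * c ≤ (1 + c) ^ p - 1 := by linarith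
    calc N * p * c = N * ((p:ℝ) * c) := by ring
      _ ≤ N * ((1 + c) ^ p - 1) := by
          exact mul_le_mul_of_nonneg_left this hN.le
  have hs₀pos : 0 < s₀ := lt_of_lt_of_le (by positivity) hs₀ge
  have hyle : y ≤ s₀ * c := by
    calc y = N * p * c * c := by rw [hyeq]; ring
      _ ≤ s₀ * c := mul_le_mul_of_nonneg_right hs₀ge hc0.le
  -- candidate inequality
  have hcand : N * ((s₀ + y) ^ p - s₀ ^ p) ≤ s₀ ^ (p + 1) := by
    have h1 : s₀ + y ≤ s₀ * (1 + c) := by nlinarith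
    have h2 : (s₀ + y) ^ p ≤ (s₀ * (1 + c)) ^ p :=
      pow_le_pow_left₀ (by positivity) h1 p
    have h3 : (s₀ * (1 + c)) ^ p = s₀ ^ p * (1 + c) ^ p := mul_pow _ _ _
    calc N * ((s₀ + y) ^ p - s₀ ^ p) ≤ N * (s₀ ^ p * (1 + c) ^ p - s₀ ^ p) := by
          refine mul_le_mul_of_nonneg_left ?_ hN.le
          rw [← h3]; linarith
      _ = s₀ ^ p * (N * ((1 + c) ^ p - 1)) := by ring
      _ = s₀ ^ p * s₀ := by rw [← hs₀]
      _ = s₀ ^ (p + 1) := by ring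
  by_contra hcon
  push_neg at hcon
  have hspos : 0 < s := lt_trans hs₀pos hcon
  -- strict comparison of the expanded sums
  have hstrict : (∑ j ∈ Finset.range p, s ^ j * y ^ (p - j) * (p.choose j : ℝ)) * s₀ ^ (p + 1)
      < (∑ j ∈ Finset.range p, s₀ ^ j * y ^ (p - j) * (p.choose j : ℝ)) * s ^ (p + 1) := by
    rw [Finset.sum_mul, Finset.sum_mul]
    refine Finset.sum_lt_sum_of_nonempty (by simp [Nat.pos_of_ne_zero]; omega) ?_
    intro j hj
    rw [Finset.mem_range] at hj
    have hchoose : (0:ℝ) < (p.choose j : ℝ) := by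
      exact_mod_cast Nat.choose_pos (le_of_lt hj)
    have hyp : (0:ℝ) < y ^ (p - j) := by positivity
    have hcore : s ^ j * s₀ ^ (p + 1) < s₀ ^ j * s ^ (p + 1) := by
      have hsplit : ∀ t : ℝ, t ^ (p + 1) = t ^ j * t ^ (p + 1 - j) := fun t => by
        rw [← pow_add]; congr 1; omega
      have hlt : s₀ ^ (p + 1 - j) < s ^ (p + 1 - j) :=
        pow_lt_pow_left₀ hcon hs₀pos.le (by omega)
      calc s ^ j * s₀ ^ (p + 1) = (s ^ j * s₀ ^ j) * s₀ ^ (p + 1 - j) := by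
            rw [hsplit s₀]; ring
        _ < (s ^ j * s₀ ^ j) * s ^ (p + 1 - j) := by
            refine mul_lt_mul_of_pos_left hlt (by positivity)
        _ = s₀ ^ j * s ^ (p + 1) := by rw [hsplit s]; ring
    calc s ^ j * y ^ (p - j) * (p.choose j : ℝ) * s₀ ^ (p + 1)
        = (y ^ (p - j) * (p.choose j : ℝ)) * (s ^ j * s₀ ^ (p + 1)) := by ring
      _ < (y ^ (p - j) * (p.choose j : ℝ)) * (s₀ ^ j * s ^ (p + 1)) := by
          exact mul_lt_mul_of_pos_left hcore (by positivity)
      _ = s₀ ^ j * y ^ (p - j) * (p.choose j : ℝ) * s ^ (p + 1) := by ring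
  have hkey' : s ^ (p + 1) ≤ N * ∑ j ∈ Finset.range p, s ^ j * y ^ (p - j) * (p.choose j : ℝ) := by
    rw [← expand_pow]; exact hkey
  have hcand' : N * ∑ j ∈ Finset.range p, s₀ ^ j * y ^ (p - j) * (p.choose j : ℝ) ≤ s₀ ^ (p + 1) := by
    rw [← expand_pow]; exact hcand
  have hfinal : s ^ (p + 1) * s₀ ^ (p + 1) < s₀ ^ (p + 1) * s ^ (p + 1) := by
    calc s ^ (p + 1) * s₀ ^ (p + 1)
        ≤ (N * ∑ j ∈ Finset.range p, s ^ j * y ^ (p - j) * (p.choose j : ℝ)) * s₀ ^ (p + 1) :=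
          mul_le_mul_of_nonneg_right hkey' (by positivity)
      _ = N * ((∑ j ∈ Finset.range p, s ^ j * y ^ (p - j) * (p.choose j : ℝ)) * s₀ ^ (p + 1)) := by
          ring
      _ < N * ((∑ j ∈ Finset.range p, s₀ ^ j * y ^ (p - j) * (p.choose j : ℝ)) * s ^ (p + 1)) :=
          mul_lt_mul_of_pos_left hstrict hN
      _ = (N * ∑ j ∈ Finset.range p, s₀ ^ j * y ^ (p - j) * (p.choose j : ℝ)) * s ^ (p + 1) := by
          ring
      _ ≤ s₀ ^ (p + 1) * s ^ (p + 1) := mul_le_mul_of_nonneg_right hcand' (by positivity)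
  rw [mul_comm] at hfinal
  exact lt_irrefl _ hfinal

/-- The purely analytic second inequality. -/
lemma part2 {n d p : ℕ} (hn : 1 ≤ n) (hd : 1 ≤ d) (hp : 1 ≤ p) {x : ℝ} (hx : 0 ≤ x) :
    (n:ℝ) * x * ((1 + Real.sqrt ((d:ℝ) / ((n:ℝ) * (p:ℝ)))) ^ p - 1)
      ≤ Real.sqrt (n:ℝ) * x * Real.sqrt ((d:ℝ) * (p:ℝ))
        * Real.exp (Real.sqrt ((d:ℝ) * (p:ℝ) / (n:ℝ))) := by
  have hnR : (0:ℝ) < n := by exact_mod_cast hn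
  have hdR : (0:ℝ) < d := by exact_mod_cast hd
  have hpR : (0:ℝ) < p := by exact_mod_cast hp
  set a : ℝ := Real.sqrt ((d:ℝ) / ((n:ℝ) * (p:ℝ))) with ha
  have ha0 : 0 ≤ a := Real.sqrt_nonneg _
  set T : ℝ := Real.sqrt ((d:ℝ) * (p:ℝ) / (n:ℝ)) with hT
  have hT0 : 0 ≤ T := Real.sqrt_nonneg _
  have hTeq : (p:ℝ) * a = T := by
    rw [ha, hT]
    rw [show (d:ℝ) * (p:ℝ) / (n:ℝ) = (p:ℝ)^2 * ((d:ℝ) / ((n:ℝ) * (p:ℝ))) by field_simp]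
    rw [Real.sqrt_mul (by positivity), Real.sqrt_sq (by positivity)]
  have h1 : (1 + a) ^ p ≤ Real.exp T := by
    calc (1 + a) ^ p ≤ (Real.exp a) ^ p := by
          refine pow_le_pow_left₀ (by positivity) ?_ p
          have := Real.add_one_le_exp a; linarith
      _ = Real.exp ((p:ℝ) * a) := by rw [← Real.exp_nat_mul]
      _ = Real.exp T := by rw [hTeq]
  have h2 : Real.exp T - 1 ≤ T * Real.exp T := by
    have h3 := Real.add_one_le_exp (-T)
    have h4 : Real.exp (-T) = 1 / Real.exp T := by
      rw [Real.exp_neg]; ring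
    have h5 : (0:ℝ) < Real.exp T := Real.exp_pos T
    rw [h4] at h3
    have h6 : (-T + 1) * Real.exp T ≤ 1 := by
      calc (-T + 1) * Real.exp T ≤ (1 / Real.exp T) * Real.exp T :=
            mul_le_mul_of_nonneg_right h3 h5.le
        _ = 1 := by field_simp
    nlinarith
  have hnT : (n:ℝ) * T = Real.sqrt (n:ℝ) * Real.sqrt ((d:ℝ) * (p:ℝ)) := by
    rw [hT, Real.sqrt_div (by positivity : (0:ℝ) ≤ (d:ℝ) * (p:ℝ)) (n:ℝ)]
    calc (n:ℝ) * (Real.sqrt ((d:ℝ) * (p:ℝ)) / Real.sqrt (n:ℝ))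
        = ((n:ℝ) / Real.sqrt (n:ℝ)) * Real.sqrt ((d:ℝ) * (p:ℝ)) := by ring
      _ = Real.sqrt (n:ℝ) * Real.sqrt ((d:ℝ) * (p:ℝ)) := by rw [Real.div_sqrt]
  have hmain : (n:ℝ) * ((1 + a) ^ p - 1) ≤ Real.sqrt (n:ℝ) * Real.sqrt ((d:ℝ) * (p:ℝ))
      * Real.exp T := by
    calc (n:ℝ) * ((1 + a) ^ p - 1) ≤ (n:ℝ) * (T * Real.exp T) := by
          refine mul_le_mul_of_nonneg_left ?_ hnR.le
          have := h1; linarith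
      _ = ((n:ℝ) * T) * Real.exp T := by ring
      _ = Real.sqrt (n:ℝ) * Real.sqrt ((d:ℝ) * (p:ℝ)) * Real.exp T := by rw [hnT]
  calc (n:ℝ) * x * ((1 + a) ^ p - 1) = x * ((n:ℝ) * ((1 + a) ^ p - 1)) := by ring
    _ ≤ x * (Real.sqrt (n:ℝ) * Real.sqrt ((d:ℝ) * (p:ℝ)) * Real.exp T) :=
        mul_le_mul_of_nonneg_left hmain hx
    _ = Real.sqrt (n:ℝ) * x * Real.sqrt ((d:ℝ) * (p:ℝ)) * Real.exp T := by ring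

end Stmt13Aux

/-- Central moment bounds for sums of locally dependent mean-zero random variables. -/
theorem stmt_13 {Ω : Type*} [MeasurableSpace Ω] (P : Measure Ω) [IsProbabilityMeasure P]
    (n k : ℕ) (hn : 1 ≤ n) (hk : 1 ≤ k)
    (X : Fin n → Ω → ℝ) (hXm : ∀ i, Measurable (X i))
    (hmean : ∀ i, ∫ ω, X i ω ∂P = 0)
    (hmom : ∀ i, Integrable (fun ω => |X i ω| ^ (2 * k)) P)
    (𝒩 : Fin n → Finset (Fin n)) (hself : ∀ i, i ∈ 𝒩 i)
    (hloc : ∀ i, IndepFun (X i) (fun ω => (∑ j, X j ω) - ∑ j ∈ 𝒩 i, X j ω) P)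
    (d : ℕ) (hddef : d = Finset.univ.sup fun i => (𝒩 i).card)
    (x : ℝ) (hxdef : x = ⨆ i, rnorm P (X i) (2 * k)) :
    rnorm P (fun ω => ∑ i, X i ω) (2 * k)
      ≤ n * x * ((1 + Real.sqrt ((d : ℝ) / ((n : ℝ) * (2 * (k : ℝ) - 1)))) ^ (2 * k - 1) - 1)
    ∧ n * x * ((1 + Real.sqrt ((d : ℝ) / ((n : ℝ) * (2 * (k : ℝ) - 1)))) ^ (2 * k - 1) - 1)
      ≤ Real.sqrt n * x * Real.sqrt ((d : ℝ) * (2 * (k : ℝ) - 1))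
          * Real.exp (Real.sqrt ((d : ℝ) * (2 * (k : ℝ) - 1) / n)) := by
  classical
  set m : ℕ := 2 * k with hmdef
  set p : ℕ := m - 1 with hpdef
  have hm0 : m ≠ 0 := by omega
  have hm1 : 1 ≤ m := by omega
  have hpm : m = p + 1 := by omega
  have hp1 : 1 ≤ p := by omega
  have hcastR : ((p : ℕ) : ℝ) = 2 * (k : ℝ) - 1 := by
    rw [hpdef, hmdef, Nat.cast_sub (by omega : 1 ≤ 2 * k)]
    push_cast; ring
  rw [← hcastR]
  -- basic objects
  set W : Ω → ℝ := fun ω => ∑ i, X i ω with hWdef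
  have hWm : Measurable W := Finset.measurable_sum Finset.univ fun i _ => hXm i
  have hXLp : ∀ i, MemLp (X i) (m : ℝ≥0∞) P := fun i =>
    Stmt13Aux.memLp_of P hm0 (hXm i) (hmom i)
  have hWLp : MemLp W (m : ℝ≥0∞) P := memLp_finsetSum Finset.univ fun i _ => hXLp i
  have hWi : Integrable (fun ω => |W ω| ^ m) P := Stmt13Aux.int_pow_of P hm0 hWLp
  have hxle : ∀ i, rnorm P (X i) m ≤ x := by
    intro i
    rw [hxdef]
    exact le_ciSup (f := fun i => rnorm P (X i) m) (Set.Finite.bddAbove (Set.finite_range _)) i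
  have hx0 : 0 ≤ x := le_trans (Stmt13Aux.rnorm_nonneg P (X ⟨0, hn⟩) m) (hxle _)
  have hd1 : 1 ≤ d := by
    rw [hddef]
    calc 1 ≤ (𝒩 ⟨0, hn⟩).card := Finset.card_pos.mpr ⟨⟨0, hn⟩, hself ⟨0, hn⟩⟩
      _ ≤ Finset.univ.sup fun i => (𝒩 i).card :=
        Finset.le_sup (f := fun i : Fin n => (𝒩 i).card) (Finset.mem_univ _)
  set s : ℝ := rnorm P W m with hsdef
  have hs0 : 0 ≤ s := Stmt13Aux.rnorm_nonneg P W m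
  set y : ℝ := (d : ℝ) * x with hydef
  have hYle : ∀ i, rnorm P (fun ω => ∑ j ∈ 𝒩 i, X j ω) m ≤ y := by
    intro i
    refine le_trans (Stmt13Aux.rnorm_sum_le P (𝒩 i) X hm1 (fun j => hXm j) (fun j => hmom j)) ?_
    calc ∑ j ∈ 𝒩 i, rnorm P (X j) m ≤ ∑ _j ∈ 𝒩 i, x := Finset.sum_le_sum fun j _ => hxle j
      _ = ((𝒩 i).card : ℝ) * x := by rw [Finset.sum_const, nsmul_eq_mul]
      _ ≤ (d : ℝ) * x := by
          refine mul_le_mul_of_nonneg_right ?_ hx0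
          exact_mod_cast hddef ▸ Finset.le_sup (Finset.mem_univ i)
  -- second inequality is purely analytic
  refine ⟨?_, Stmt13Aux.part2 hn hd1 hp1 hx0⟩
  rcases eq_or_lt_of_le hx0 with hxz | hxpos
  · -- degenerate case x = 0
    have hsle : s ≤ 0 := by
      refine le_trans (Stmt13Aux.rnorm_sum_le P Finset.univ X hm1 (fun j => hXm j)
        (fun j => hmom j)) ?_
      exact Finset.sum_nonpos fun j _ => (hxle j).trans (le_of_eq hxz.symm)
    have hs00 : s = 0 := le_antisymm hsle hs0
    rw [← hxz]
    simp [hs00]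
  -- main case x > 0
  have hnpos : (0 : ℝ) < n := by exact_mod_cast hn
  have hppos : (0 : ℝ) < (p : ℝ) := by exact_mod_cast hp1
  have hdpos : (0 : ℝ) < (d : ℝ) := by exact_mod_cast hd1
  have hy0 : 0 < y := mul_pos hdpos hxpos
  -- integrability of the various products
  have hIXWp : ∀ i, Integrable (fun ω => X i ω * W ω ^ p) P := fun i => by
    have := Stmt13Aux.holder_int3' P (b := p) (c := 0) hm0 (by omega) (hXm i) hWm hWm
      (hmom i) hWi hWi
    simpa using this
  -- the key per-index estimate
  have hterm : ∀ i : Fin n, ∫ ω, X i ω * W ω ^ p ∂P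
      ≤ ∑ j ∈ Finset.range p, x * s ^ j * y ^ (p - j) * (p.choose j : ℝ) := by
    intro i
    set Y : Ω → ℝ := fun ω => ∑ j ∈ 𝒩 i, X j ω with hYdef
    set Z : Ω → ℝ := fun ω => W ω - Y ω with hZdef
    have hYm : Measurable Y := Finset.measurable_sum _ fun j _ => hXm j
    have hZm : Measurable Z := hWm.sub hYm
    have hYLp : MemLp Y (m : ℝ≥0∞) P := memLp_finsetSum _ fun j _ => hXLp j
    have hZLp : MemLp Z (m : ℝ≥0∞) P := hWLp.sub hYLp
    have hZi : Integrable (fun ω => |Z ω| ^ m) P := Stmt13Aux.int_pow_of P hm0 hZLp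
    have hYi : Integrable (fun ω => |Y ω| ^ m) P := Stmt13Aux.int_pow_of P hm0 hYLp
    have hIXZ : Integrable (fun ω => X i ω * Z ω ^ p) P := by
      have := Stmt13Aux.holder_int3' P (b := p) (c := 0) hm0 (by omega) (hXm i) hZm hZm
        (hmom i) hZi hZi
      simpa using this
    have hIT : ∀ j ∈ Finset.range p,
        Integrable (fun ω => X i ω * W ω ^ j * (-Y ω) ^ (p - j)) P := by
      intro j hj
      refine Stmt13Aux.holder_int3' P (h := fun ω => -Y ω) hm0
        (by have := Finset.mem_range.mp hj; omega) (hXm i) hWm ?_ (hmom i) hWi ?_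
      · exact hYm.neg
      · simpa using hYi
    -- pointwise binomial expansion
    have hpt : ∀ ω, X i ω * W ω ^ p = X i ω * Z ω ^ p
        - ∑ j ∈ Finset.range p, (X i ω * W ω ^ j * (-Y ω) ^ (p - j)) * (p.choose j : ℝ) := by
      intro ω
      have hz : Z ω = W ω + (-Y ω) := by
        show W ω - Y ω = W ω + (-Y ω); ring
      have hbin : Z ω ^ p
          = ∑ j ∈ Finset.range (p + 1), W ω ^ j * (-Y ω) ^ (p - j) * (p.choose j : ℝ) := by
        rw [hz, add_pow]
      rw [hbin, Finset.sum_range_succ]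
      simp only [Nat.sub_self, pow_zero, Nat.choose_self, Nat.cast_one, mul_one, one_mul]
      have hfac : ∑ j ∈ Finset.range p, (X i ω * W ω ^ j * (-Y ω) ^ (p - j)) * (p.choose j : ℝ)
          = X i ω * ∑ j ∈ Finset.range p, W ω ^ j * (-Y ω) ^ (p - j) * (p.choose j : ℝ) := by
        rw [Finset.mul_sum]
        exact Finset.sum_congr rfl fun j _ => by ring
      rw [hfac]
      ring
    -- the independence cancellation
    have hzero : ∫ ω, X i ω * Z ω ^ p ∂P = 0 := by
      have hind : IndepFun (X i) (fun ω => Z ω ^ p) P :=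
        (hloc i).comp measurable_id (measurable_id.pow_const p)
      rw [hind.integral_fun_mul_eq_mul_integral (hXm i).aestronglyMeasurable
        (hZm.pow_const p).aestronglyMeasurable, hmean i, zero_mul]
    have hsum_int : ∫ ω, X i ω * W ω ^ p ∂P
        = - ∑ j ∈ Finset.range p,
            (∫ ω, X i ω * W ω ^ j * (-Y ω) ^ (p - j) ∂P) * (p.choose j : ℝ) := by
      rw [show (fun ω => X i ω * W ω ^ p) = (fun ω => X i ω * Z ω ^ p
          - ∑ j ∈ Finset.range p, (X i ω * W ω ^ j * (-Y ω) ^ (p - j)) * (p.choose j : ℝ))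
        from funext hpt]
      rw [integral_sub hIXZ (integrable_finset_sum _ fun j hj => (hIT j hj).mul_const _),
        hzero, zero_sub, integral_finset_sum _ fun j hj => (hIT j hj).mul_const _]
      congr 1
      exact Finset.sum_congr rfl fun j _ => integral_mul_const _ _
    -- bound each term via Hölder
    have hbound : ∀ j ∈ Finset.range p,
        |∫ ω, X i ω * W ω ^ j * (-Y ω) ^ (p - j) ∂P| ≤ x * s ^ j * y ^ (p - j) := by
      intro j hj
      have h1 : |∫ ω, X i ω * W ω ^ j * (-Y ω) ^ (p - j) ∂P|
          ≤ ∫ ω, |X i ω| * |W ω| ^ j * |Y ω| ^ (p - j) ∂P := by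
        simpa [Real.norm_eq_abs, abs_mul, abs_pow, abs_neg] using
          norm_integral_le_integral_norm (μ := P) (fun ω => X i ω * W ω ^ j * (-Y ω) ^ (p - j))
      have h3 := Stmt13Aux.holder_le3 P hm0
        (by have := Finset.mem_range.mp hj; omega : 1 + j + (p - j) = m)
        (hXm i) hWm hYm (hmom i) hWi hYi
      calc |∫ ω, X i ω * W ω ^ j * (-Y ω) ^ (p - j) ∂P|
          ≤ ∫ ω, |X i ω| * |W ω| ^ j * |Y ω| ^ (p - j) ∂P := h1
        _ ≤ rnorm P (X i) m * rnorm P W m ^ j * rnorm P Y m ^ (p - j) := h3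
        _ ≤ x * s ^ j * y ^ (p - j) := by
            have A : rnorm P (X i) m * rnorm P W m ^ j ≤ x * s ^ j :=
              mul_le_mul_of_nonneg_right (hxle i) (pow_nonneg hs0 j)
            have B : rnorm P Y m ^ (p - j) ≤ y ^ (p - j) :=
              pow_le_pow_left₀ (Stmt13Aux.rnorm_nonneg P Y m) (hYle i) _
            exact mul_le_mul A B (pow_nonneg (Stmt13Aux.rnorm_nonneg P Y m) _)
              (by positivity)
    rw [hsum_int]
    refine le_trans (neg_le_abs _) ?_
    refine le_trans (Finset.abs_sum_le_sum_abs _ _) ?_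
    refine Finset.sum_le_sum fun j hj => ?_
    rw [abs_mul, Nat.abs_cast]
    exact mul_le_mul_of_nonneg_right (hbound j hj) (Nat.cast_nonneg _)
  -- assemble the global bound
  have hEven : Even m := ⟨k, by omega⟩
  have hsm : s ^ (p + 1) = ∫ ω, W ω ^ m ∂P := by
    rw [← hpm, hsdef, Stmt13Aux.rnorm_pow_eq P hm0 W]
    exact integral_congr_ae (Filter.Eventually.of_forall fun ω => hEven.pow_abs (W ω))
  have h1 : ∫ ω, W ω ^ m ∂P = ∑ i, ∫ ω, X i ω * W ω ^ p ∂P := by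
    rw [← integral_finset_sum _ fun i _ => hIXWp i]
    refine integral_congr_ae (Filter.Eventually.of_forall fun ω => ?_)
    show W ω ^ m = ∑ i, X i ω * W ω ^ p
    rw [← Finset.sum_mul]
    show W ω ^ m = W ω * W ω ^ p
    rw [hpm, pow_succ]
    ring
  have key : s ^ (p + 1) ≤ ((n : ℝ) * x) * ((s + y) ^ p - s ^ p) := by
    rw [hsm, h1]
    calc ∑ i, ∫ ω, X i ω * W ω ^ p ∂P
        ≤ ∑ _i : Fin n, ∑ j ∈ Finset.range p, x * s ^ j * y ^ (p - j) * (p.choose j : ℝ) :=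
          Finset.sum_le_sum fun i _ => hterm i
      _ = (n : ℝ) * ∑ j ∈ Finset.range p, x * s ^ j * y ^ (p - j) * (p.choose j : ℝ) := by
          rw [Finset.sum_const, Finset.card_univ, Fintype.card_fin, nsmul_eq_mul]
      _ = ((n : ℝ) * x) * ((s + y) ^ p - s ^ p) := by
          rw [Stmt13Aux.expand_pow s y p, Finset.mul_sum, Finset.mul_sum]
          exact Finset.sum_congr rfl fun j _ => by ring
  have hNpos : (0 : ℝ) < (n : ℝ) * x := mul_pos hnpos hxpos
  have hc : Real.sqrt ((d : ℝ) / ((n : ℝ) * (p : ℝ)))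
      = Real.sqrt (y / (((n : ℝ) * x) * (p : ℝ))) := by
    congr 1
    rw [hydef]
    field_simp
  exact Stmt13Aux.detD hp1 hNpos hy0 hs0 hc key
end

section
/- Let X₁, …, X_n be real random variables with mean zero such that |X_i| ≤ x almost surely for all i and some x > 0, and suppose that for each i there is a set 𝒩_i ⊆ {1,…,n} with i ∈ 𝒩_i such that X_i is independent of W − Σ_{j∈𝒩_i} X_j, where W := Σ_{i=1}^n X_i. Let d := max_i |𝒩_i|. Then for all t ≥ √(2 e n d x²), P(|W| > t) ≤ e·exp{−(t²/(2 e n d x²))·(1 − (t/(n x))·√(6/e))}. -/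
open MeasureTheory ProbabilityTheory Real

section Aux

variable {Ω : Type*} [MeasurableSpace Ω] {P : Measure Ω} [IsProbabilityMeasure P]

lemma aux_integrable_exp {Z : Ω → ℝ} (hZ : Measurable Z) {M : ℝ}
    (h : ∀ᵐ ω ∂P, |Z ω| ≤ M) (s : ℝ) :
    Integrable (fun ω => Real.exp (s * Z ω)) P := by
  refine (integrable_const (Real.exp (|s| * M))).mono'
    (measurable_exp.comp (hZ.const_mul s)).aestronglyMeasurable ?_
  filter_upwards [h] with ω hω
  rw [Real.norm_eq_abs, abs_of_pos (Real.exp_pos _)]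
  refine Real.exp_le_exp.2 (le_trans (le_abs_self _) ?_)
  rw [abs_mul]
  exact mul_le_mul_of_nonneg_left hω (abs_nonneg s)

lemma aux_integrable_mul_exp {Z V : Ω → ℝ} (hZ : Measurable Z) (hV : Measurable V)
    {M N : ℝ} (hZb : ∀ᵐ ω ∂P, |Z ω| ≤ M) (hVb : ∀ᵐ ω ∂P, |V ω| ≤ N) (s : ℝ) :
    Integrable (fun ω => Z ω * Real.exp (s * V ω)) P := by
  refine (integrable_const (M * Real.exp (|s| * N))).mono'
    (hZ.mul (measurable_exp.comp (hV.const_mul s))).aestronglyMeasurable ?_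
  filter_upwards [hZb, hVb] with ω h1 h2
  rw [Real.norm_eq_abs, abs_mul, abs_of_pos (Real.exp_pos _)]
  have he : Real.exp (s * V ω) ≤ Real.exp (|s| * N) := by
    refine Real.exp_le_exp.2 (le_trans (le_abs_self _) ?_)
    rw [abs_mul]
    exact mul_le_mul_of_nonneg_left h2 (abs_nonneg s)
  exact mul_le_mul h1 he (Real.exp_pos _).le (le_trans (abs_nonneg _) h1)

lemma aux_abs_exp_sub_one {a c : ℝ} (h : |a| ≤ c) : |Real.exp a - 1| ≤ c * Real.exp c := by
  have hc : 0 ≤ c := le_trans (abs_nonneg a) h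
  have h1 : |Real.exp a - 1| ≤ Real.exp |a| - 1 := by
    rcases le_or_gt 0 a with ha | ha
    · rw [abs_of_nonneg ha, abs_of_nonneg (sub_nonneg.2 (Real.one_le_exp ha))]
    · rw [abs_of_neg ha, abs_of_nonpos (sub_nonpos.2 (Real.exp_le_one_iff.2 ha.le))]
      have h2 := Real.add_one_le_exp a
      have h3 := Real.add_one_le_exp (-a)
      linarith
  have h2 : Real.exp |a| - 1 ≤ |a| * Real.exp |a| := by
    have key : Real.exp |a| * Real.exp (-|a|) = 1 := by
      rw [← Real.exp_add]; simp
    nlinarith [Real.add_one_le_exp (-|a|), Real.exp_pos |a|]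
  have h3 : |a| * Real.exp |a| ≤ c * Real.exp c :=
    mul_le_mul h (Real.exp_le_exp.2 h) (Real.exp_pos _).le hc
  linarith

end Aux



section B
variable {Ω : Type*} [MeasurableSpace Ω] {P : Measure Ω} [IsProbabilityMeasure P]

lemma aux_hasDerivAt_mgf {W : Ω → ℝ} (hWm : Measurable W) {M : ℝ} (hM : 0 ≤ M)
    (hWb : ∀ᵐ ω ∂P, |W ω| ≤ M) (s : ℝ) :
    HasDerivAt (fun u => mgf W P u) (∫ ω, W ω * Real.exp (s * W ω) ∂P) s := by
  have key := hasDerivAt_integral_of_dominated_loc_of_lip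
    (F := fun u ω => Real.exp (u * W ω))
    (F' := fun ω => W ω * Real.exp (s * W ω)) (x₀ := s) (μ := P)
    (bound := fun _ => M * Real.exp ((|s| + 1) * M)) (s := Metric.ball s 1) (Metric.ball_mem_nhds s one_pos)
    (Filter.Eventually.of_forall fun u =>
      (measurable_exp.comp (hWm.const_mul u)).aestronglyMeasurable)
    ?_ ?_ ?_ (integrable_const _) ?_
  · have h2 := key.2
    have : (fun u => mgf W P u) = fun u => ∫ ω, Real.exp (u * W ω) ∂P := by
      funext u; rfl
    rw [this]
    exact h2
  · -- integrable at s
    refine (integrable_const (Real.exp (|s| * M))).mono'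
      (measurable_exp.comp (hWm.const_mul s)).aestronglyMeasurable ?_
    filter_upwards [hWb] with ω hω
    rw [Real.norm_eq_abs, abs_of_pos (Real.exp_pos _)]
    refine Real.exp_le_exp.2 (le_trans (le_abs_self _) ?_)
    rw [abs_mul]
    exact mul_le_mul_of_nonneg_left hω (abs_nonneg s)
  · exact (hWm.mul (measurable_exp.comp (hWm.const_mul s))).aestronglyMeasurable
  · -- Lipschitz
    filter_upwards [hWb] with ω hω
    refine (convex_ball s 1).lipschitzOnWith_of_nnnorm_hasDerivWithin_le
      (f' := fun u => Real.exp (u * W ω) * W ω)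
      (fun u _ => (((hasDerivAt_mul_const (W ω)).exp (x := u))).hasDerivWithinAt) ?_
    intro u hu
    rw [← NNReal.coe_le_coe, coe_nnnorm, Real.coe_nnabs, Real.norm_eq_abs]
    have hub : |u| ≤ |s| + 1 := by
      have := mem_ball_iff_norm.1 hu
      rw [Real.norm_eq_abs] at this
      calc |u| = |s + (u - s)| := by ring_nf
      _ ≤ |s| + |u - s| := abs_add_le _ _
      _ ≤ |s| + 1 := by linarith
    have h1 : Real.exp (u * W ω) ≤ Real.exp ((|s| + 1) * M) := by
      refine Real.exp_le_exp.2 (le_trans (le_abs_self _) ?_)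
      rw [abs_mul]
      exact mul_le_mul hub hω (abs_nonneg _) (by positivity)
    rw [show |M * Real.exp ((|s| + 1) * M)| = M * Real.exp ((|s| + 1) * M) from
      abs_of_nonneg (mul_nonneg hM (Real.exp_pos _).le)]
    calc |Real.exp (u * W ω) * W ω| = Real.exp (u * W ω) * |W ω| := by
          rw [abs_mul, abs_of_pos (Real.exp_pos _)]
    _ ≤ Real.exp ((|s| + 1) * M) * M :=
      mul_le_mul h1 hω (abs_nonneg _) (Real.exp_pos _).le
    _ = M * Real.exp ((|s| + 1) * M) := mul_comm _ _
  · refine Filter.Eventually.of_forall fun ω => ?_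
    have := ((hasDerivAt_mul_const (W ω)).exp (x := s))
    simpa [mul_comm] using this

end B

section C
variable {Ω : Type*} [MeasurableSpace Ω] {P : Measure Ω} [IsProbabilityMeasure P]

lemma mgf_aux (n : ℕ) (X : Fin n → Ω → ℝ) (hXm : ∀ i, Measurable (X i))
    (hmean : ∀ i, ∫ ω, X i ω ∂P = 0)
    (x : ℝ) (hx : 0 < x) (hbdd : ∀ i, ∀ᵐ ω ∂P, |X i ω| ≤ x)
    (𝒩 : Fin n → Finset (Fin n))
    (hloc : ∀ i, IndepFun (X i) (fun ω => (∑ j, X j ω) - ∑ j ∈ 𝒩 i, X j ω) P)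
    (d : ℕ) (hd : ∀ i, (𝒩 i).card ≤ d)
    (l : ℝ) (hl0 : 0 ≤ l) (hl : 2 * l * (↑d * x) ≤ 1) :
    mgf (fun ω => ∑ i, X i ω) P l
      ≤ Real.exp (Real.exp 1 * ↑n * ↑d * x ^ 2 * l ^ 2 / 2) := by
  set W : Ω → ℝ := fun ω => ∑ i, X i ω with hWdef
  have hWm : Measurable W := Finset.univ.measurable_sum fun i _ => hXm i
  have hball : ∀ᵐ ω ∂P, ∀ i, |X i ω| ≤ x := ae_all_iff.2 hbdd
  have hWb : ∀ᵐ ω ∂P, |W ω| ≤ ↑n * x := by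
    filter_upwards [hball] with ω hω
    calc |W ω| ≤ ∑ i, |X i ω| := Finset.abs_sum_le_sum_abs _ _
    _ ≤ ∑ _i : Fin n, x := Finset.sum_le_sum fun i _ => hω i
    _ = ↑n * x := by simp [Finset.sum_const, Finset.card_univ, nsmul_eq_mul]
  have hM : (0:ℝ) ≤ ↑n * x := by positivity
  have hmgfpos : ∀ s, 0 < mgf W P s := fun s => mgf_pos (aux_integrable_exp hWm hWb s)
  have hdx : (0:ℝ) ≤ ↑d * x := by positivity
  -- core derivative bound
  have hcore : ∀ s, 0 ≤ s → 2 * s * (↑d * x) ≤ 1 →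
      ∫ ω, W ω * Real.exp (s * W ω) ∂P
        ≤ Real.exp 1 * ↑n * ↑d * x ^ 2 * s * mgf W P s := by
    intro s hs0 hs1
    have hsplit : ∫ ω, W ω * Real.exp (s * W ω) ∂P
        = ∑ i, ∫ ω, X i ω * Real.exp (s * W ω) ∂P := by
      rw [← integral_finset_sum]
      · congr 1; funext ω; rw [← Finset.sum_mul]
      · intro i _; exact aux_integrable_mul_exp (hXm i) hWm (hbdd i) hWb s
    have hterm : ∀ i, ∫ ω, X i ω * Real.exp (s * W ω) ∂P
        ≤ Real.exp 1 * ↑d * x ^ 2 * s * mgf W P s := by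
      intro i
      set Y : Ω → ℝ := fun ω => ∑ j ∈ 𝒩 i, X j ω with hYdef
      set V : Ω → ℝ := fun ω => W ω - Y ω with hVdef
      have hYm : Measurable Y := (𝒩 i).measurable_sum fun j _ => hXm j
      have hVm : Measurable V := hWm.sub hYm
      have hYb : ∀ᵐ ω ∂P, |Y ω| ≤ ↑d * x := by
        filter_upwards [hball] with ω hω
        calc |Y ω| ≤ ∑ j ∈ 𝒩 i, |X j ω| := Finset.abs_sum_le_sum_abs _ _
        _ ≤ ∑ _j ∈ 𝒩 i, x := Finset.sum_le_sum fun j _ => hω j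
        _ = ((𝒩 i).card : ℝ) * x := by simp [Finset.sum_const, nsmul_eq_mul]
        _ ≤ ↑d * x := mul_le_mul_of_nonneg_right (Nat.cast_le.2 (hd i)) hx.le
      have hVb : ∀ᵐ ω ∂P, |V ω| ≤ ↑n * x + ↑d * x := by
        filter_upwards [hWb, hYb] with ω h1 h2
        calc |V ω| ≤ |W ω| + |Y ω| := abs_sub _ _
        _ ≤ ↑n * x + ↑d * x := add_le_add h1 h2
      have hindep : IndepFun (X i) (fun ω => Real.exp (s * V ω)) P :=
        (hloc i).comp measurable_id (measurable_exp.comp (measurable_id.const_mul s))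
      have hint1 : Integrable (fun ω => X i ω * Real.exp (s * V ω)) P :=
        aux_integrable_mul_exp (hXm i) hVm (hbdd i) hVb s
      have hint0 : Integrable (fun ω => X i ω * Real.exp (s * W ω)) P :=
        aux_integrable_mul_exp (hXm i) hWm (hbdd i) hWb s
      have hzero : ∫ ω, X i ω * Real.exp (s * V ω) ∂P = 0 := by
        rw [hindep.integral_fun_mul_eq_mul_integral (hXm i).aestronglyMeasurable
          (measurable_exp.comp (hVm.const_mul s)).aestronglyMeasurable, hmean i, zero_mul]
      have hfun : (fun ω => X i ω * Real.exp (s * V ω) * (Real.exp (s * Y ω) - 1))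
          = fun ω => X i ω * Real.exp (s * W ω) - X i ω * Real.exp (s * V ω) := by
        funext ω
        have hexp : Real.exp (s * W ω) = Real.exp (s * V ω) * Real.exp (s * Y ω) := by
          rw [← Real.exp_add]; congr 1; simp only [hVdef]; ring
        rw [hexp]; ring
      have hdecomp : ∫ ω, X i ω * Real.exp (s * W ω) ∂P
          = ∫ ω, X i ω * Real.exp (s * V ω) * (Real.exp (s * Y ω) - 1) ∂P := by
        rw [hfun, integral_sub hint0 hint1, hzero, sub_zero]
      have hint_lhs : Integrable
          (fun ω => X i ω * Real.exp (s * V ω) * (Real.exp (s * Y ω) - 1)) P := by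
        rw [hfun]; exact hint0.sub hint1
      have hint_rhs : Integrable
          (fun ω => Real.exp 1 * ↑d * x ^ 2 * s * Real.exp (s * W ω)) P :=
        (aux_integrable_exp hWm hWb s).const_mul _
      have hptwise : ∀ᵐ ω ∂P, X i ω * Real.exp (s * V ω) * (Real.exp (s * Y ω) - 1)
          ≤ Real.exp 1 * ↑d * x ^ 2 * s * Real.exp (s * W ω) := by
        filter_upwards [hball, hYb] with ω h1 h2
        have hXib : |X i ω| ≤ x := h1 i
        have hsY : |s * Y ω| ≤ s * (↑d * x) := by
          rw [abs_mul, abs_of_nonneg hs0]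
          exact mul_le_mul_of_nonneg_left h2 hs0
        have hE1 : |Real.exp (s * Y ω) - 1| ≤ s * (↑d * x) * Real.exp (s * (↑d * x)) :=
          aux_abs_exp_sub_one hsY
        have hEV : Real.exp (s * V ω) ≤ Real.exp (s * (↑d * x)) * Real.exp (s * W ω) := by
          rw [← Real.exp_add]
          refine Real.exp_le_exp.2 ?_
          have hVW : s * V ω = s * W ω - s * Y ω := by simp only [hVdef]; ring
          rw [hVW]
          have hna := neg_abs_le (s * Y ω)
          linarith
        calc X i ω * Real.exp (s * V ω) * (Real.exp (s * Y ω) - 1)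
            ≤ |X i ω * Real.exp (s * V ω) * (Real.exp (s * Y ω) - 1)| := le_abs_self _
        _ = |X i ω| * Real.exp (s * V ω) * |Real.exp (s * Y ω) - 1| := by
            rw [abs_mul, abs_mul, abs_of_pos (Real.exp_pos _)]
        _ ≤ x * (Real.exp (s * (↑d * x)) * Real.exp (s * W ω))
              * (s * (↑d * x) * Real.exp (s * (↑d * x))) := by
            refine mul_le_mul (mul_le_mul hXib hEV (Real.exp_pos _).le
              (le_trans (abs_nonneg _) hXib)) hE1 (abs_nonneg _) ?_
            positivity
        _ = (↑d * x ^ 2 * s) * (Real.exp (s * (↑d * x)) * Real.exp (s * (↑d * x)))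
              * Real.exp (s * W ω) := by ring
        _ ≤ (↑d * x ^ 2 * s) * Real.exp 1 * Real.exp (s * W ω) := by
            have hee : Real.exp (s * (↑d * x)) * Real.exp (s * (↑d * x))
                = Real.exp (2 * s * (↑d * x)) := by
              rw [← Real.exp_add]; ring_nf
            rw [hee]
            have h2e : Real.exp (2 * s * (↑d * x)) ≤ Real.exp 1 := Real.exp_le_exp.2 hs1
            have hnn : (0:ℝ) ≤ ↑d * x ^ 2 * s := by positivity
            exact mul_le_mul_of_nonneg_right
              (mul_le_mul_of_nonneg_left h2e hnn) (Real.exp_pos _).le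
        _ = Real.exp 1 * ↑d * x ^ 2 * s * Real.exp (s * W ω) := by ring
      calc ∫ ω, X i ω * Real.exp (s * W ω) ∂P
          = ∫ ω, X i ω * Real.exp (s * V ω) * (Real.exp (s * Y ω) - 1) ∂P := hdecomp
      _ ≤ ∫ ω, Real.exp 1 * ↑d * x ^ 2 * s * Real.exp (s * W ω) ∂P :=
          integral_mono_ae hint_lhs hint_rhs hptwise
      _ = Real.exp 1 * ↑d * x ^ 2 * s * mgf W P s := by
          rw [integral_const_mul]; rfl
    calc ∫ ω, W ω * Real.exp (s * W ω) ∂P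
        = ∑ i, ∫ ω, X i ω * Real.exp (s * W ω) ∂P := hsplit
    _ ≤ ∑ _i : Fin n, Real.exp 1 * ↑d * x ^ 2 * s * mgf W P s :=
        Finset.sum_le_sum fun i _ => hterm i
    _ = ↑n * (Real.exp 1 * ↑d * x ^ 2 * s * mgf W P s) := by
        simp [Finset.sum_const, Finset.card_univ, nsmul_eq_mul]
    _ = Real.exp 1 * ↑n * ↑d * x ^ 2 * s * mgf W P s := by ring
  -- Grönwall
  set C : ℝ := Real.exp 1 * ↑n * ↑d * x ^ 2 with hCdef
  set g : ℝ → ℝ := fun u => C * u ^ 2 / 2 - Real.log (mgf W P u) with hgdef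
  have hg : ∀ s, HasDerivAt g
      (C * s - (∫ ω, W ω * Real.exp (s * W ω) ∂P) / mgf W P s) s := by
    intro s
    have h1 : HasDerivAt (fun u : ℝ => C * u ^ 2 / 2) (C * s) s := by
      have := ((hasDerivAt_pow 2 s).const_mul C).div_const 2
      refine this.congr_deriv ?_
      simp
      ring
    have h2 : HasDerivAt (fun u => Real.log (mgf W P u))
        ((∫ ω, W ω * Real.exp (s * W ω) ∂P) / mgf W P s) s :=
      (aux_hasDerivAt_mgf hWm hM hWb s).log (hmgfpos s).ne'
    exact h1.sub h2
  have hgdiff : Differentiable ℝ g := fun s => (hg s).differentiableAt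
  have hmono : MonotoneOn g (Set.Icc 0 l) := by
    refine monotoneOn_of_deriv_nonneg (convex_Icc 0 l) hgdiff.continuous.continuousOn
      (fun s _ => (hgdiff s).differentiableWithinAt) ?_
    intro s hs
    rw [interior_Icc] at hs
    rw [(hg s).deriv]
    have hs1 : 2 * s * (↑d * x) ≤ 1 := by
      refine le_trans ?_ hl
      have : 2 * s ≤ 2 * l := by linarith [hs.2]
      exact mul_le_mul_of_nonneg_right this hdx
    have hc := hcore s hs.1.le hs1
    rw [sub_nonneg, div_le_iff₀ (hmgfpos s)]
    calc (∫ ω, W ω * Real.exp (s * W ω) ∂P)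
        ≤ Real.exp 1 * ↑n * ↑d * x ^ 2 * s * mgf W P s := hc
    _ = C * s * mgf W P s := by rw [hCdef]
  have h0 : g 0 = 0 := by
    simp [hgdef, mgf_zero]
  have hgl : g 0 ≤ g l :=
    hmono (Set.mem_Icc.2 ⟨le_refl 0, hl0⟩) (Set.mem_Icc.2 ⟨hl0, le_refl l⟩) hl0
  rw [h0] at hgl
  have hlog : Real.log (mgf W P l) ≤ C * l ^ 2 / 2 := by
    simp only [hgdef] at hgl
    linarith
  exact (Real.log_le_iff_le_exp (hmgfpos l)).1 hlog

end C

/-- Concentration for sums of bounded, locally dependent, mean-zero random variables. -/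
theorem stmt_14 {Ω : Type*} [MeasurableSpace Ω] (P : Measure Ω) [IsProbabilityMeasure P]
    (n : ℕ) (hn : 1 ≤ n)
    (X : Fin n → Ω → ℝ) (hXm : ∀ i, Measurable (X i))
    (hmean : ∀ i, ∫ ω, X i ω ∂P = 0)
    (x : ℝ) (hx : 0 < x) (hbdd : ∀ i, ∀ᵐ ω ∂P, |X i ω| ≤ x)
    (𝒩 : Fin n → Finset (Fin n)) (hself : ∀ i, i ∈ 𝒩 i)
    (hloc : ∀ i, IndepFun (X i) (fun ω => (∑ j, X j ω) - ∑ j ∈ 𝒩 i, X j ω) P)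
    (d : ℕ) (hddef : d = Finset.univ.sup fun i => (𝒩 i).card)
    (t : ℝ) (ht : Real.sqrt (2 * Real.exp 1 * n * d * x ^ 2) ≤ t) :
    P {ω | t < |∑ i, X i ω|}
      ≤ ENNReal.ofReal (Real.exp 1 *
          Real.exp (-(t ^ 2 / (2 * Real.exp 1 * n * d * x ^ 2))
            * (1 - t / ((n : ℝ) * x) * Real.sqrt (6 / Real.exp 1)))) := by
  have hdcard : ∀ i, (𝒩 i).card ≤ d := fun i => hddef ▸ Finset.le_sup (f := fun i => (𝒩 i).card) (Finset.mem_univ i)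
  have hd1 : 1 ≤ d := by
    have i0 : Fin n := ⟨0, hn⟩
    exact le_trans (Finset.card_pos.2 ⟨i0, hself i0⟩) (hdcard i0)
  have hn' : (0:ℝ) < n := by exact_mod_cast hn
  have hd' : (0:ℝ) < d := by exact_mod_cast hd1
  have harg : (0:ℝ) < 2 * Real.exp 1 * n * d * x ^ 2 := by positivity
  have ht0 : 0 < t := lt_of_lt_of_le (Real.sqrt_pos.2 harg) ht
  have hWm : Measurable (fun ω => ∑ i, X i ω) := Finset.univ.measurable_sum fun i _ => hXm i
  have hball : ∀ᵐ ω ∂P, ∀ i, |X i ω| ≤ x := ae_all_iff.2 hbdd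
  have hWb : ∀ᵐ ω ∂P, |∑ i, X i ω| ≤ ↑n * x := by
    filter_upwards [hball] with ω hω
    calc |∑ i, X i ω| ≤ ∑ i, |X i ω| := Finset.abs_sum_le_sum_abs _ _
    _ ≤ ∑ _i : Fin n, x := Finset.sum_le_sum fun i _ => hω i
    _ = ↑n * x := by simp [Finset.sum_const, Finset.card_univ, nsmul_eq_mul]
  by_cases hcase : (n:ℝ) * x ≤ t
  · have hae : ∀ᵐ ω ∂P, ¬ (t < |∑ i, X i ω|) := by
      filter_upwards [hWb] with ω hω
      exact not_lt.2 (le_trans hω hcase)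
    have hnull : P {ω | t < |∑ i, X i ω|} = 0 := by
      have := ae_iff.1 hae
      simpa using this
    rw [hnull]
    positivity
  push_neg at hcase
  set l : ℝ := t / (Real.exp 1 * ↑n * ↑d * x ^ 2) with hldef
  have hCpos : (0:ℝ) < Real.exp 1 * ↑n * ↑d * x ^ 2 := by positivity
  have hl0 : 0 ≤ l := (div_pos ht0 hCpos).le
  have h2le : (2:ℝ) ≤ Real.exp 1 := by
    have := Real.add_one_le_exp 1; linarith
  have hl1 : 2 * l * (↑d * x) ≤ 1 := by
    have h2t : 2 * t ≤ Real.exp 1 * (↑n * x) := by nlinarith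
    have heq : 2 * (t / (Real.exp 1 * ↑n * ↑d * x ^ 2)) * (↑d * x)
        = (2 * t * (↑d * x)) / (Real.exp 1 * ↑n * ↑d * x ^ 2) := by ring
    rw [hldef, heq, div_le_one hCpos]
    nlinarith [mul_le_mul_of_nonneg_right h2t (mul_nonneg hd'.le hx.le)]
  have hmgfW := mgf_aux n X hXm hmean x hx hbdd 𝒩 hloc d hdcard l hl0 hl1
  set X' : Fin n → Ω → ℝ := fun i ω => -(X i ω) with hX'def
  have hsum' : ∀ ω, ∑ i, X' i ω = -(∑ i, X i ω) := by
    intro ω; simp [hX'def]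
  have hloc' : ∀ i, IndepFun (X' i) (fun ω => (∑ j, X' j ω) - ∑ j ∈ 𝒩 i, X' j ω) P := by
    intro i
    have h := (hloc i).comp (measurable_neg) (measurable_neg)
    have heq2 : (fun r : ℝ => -r) ∘ (fun ω => (∑ j, X j ω) - ∑ j ∈ 𝒩 i, X j ω)
        = fun ω => (∑ j, X' j ω) - ∑ j ∈ 𝒩 i, X' j ω := by
      funext ω
      simp only [hX'def, Function.comp_apply, neg_sub, Finset.sum_neg_distrib]
      ring
    rw [show (fun r : ℝ => -r) ∘ (X i) = X' i from rfl, heq2] at h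
    exact h
  have hX'm : ∀ i, Measurable (X' i) := fun i => (hXm i).neg
  have hmgfW' := mgf_aux n X' hX'm
    (fun i => by simp [hX'def, integral_neg, hmean i]) x hx
    (fun i => by simpa [hX'def] using hbdd i) 𝒩 hloc' d hdcard l hl0 hl1
  have hW'm : Measurable (fun ω => ∑ i, X' i ω) := Finset.univ.measurable_sum fun i _ => hX'm i
  have hW'b : ∀ᵐ ω ∂P, |∑ i, X' i ω| ≤ ↑n * x := by
    filter_upwards [hWb] with ω hω
    rw [hsum' ω, abs_neg]; exact hω
  have hint : Integrable (fun ω => Real.exp (l * (∑ i, X i ω))) P :=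
    aux_integrable_exp hWm hWb l
  have hint' : Integrable (fun ω => Real.exp (l * (∑ i, X' i ω))) P :=
    aux_integrable_exp hW'm hW'b l
  have hch1 := measure_ge_le_exp_mul_mgf (X := fun ω => ∑ i, X i ω) (μ := P) t hl0 hint
  have hch2 := measure_ge_le_exp_mul_mgf (X := fun ω => ∑ i, X' i ω) (μ := P) t hl0 hint'
  set A : ℝ := t ^ 2 / (2 * Real.exp 1 * ↑n * ↑d * x ^ 2) with hAdef
  have hkey : Real.exp (-l * t) * Real.exp (Real.exp 1 * ↑n * ↑d * x ^ 2 * l ^ 2 / 2)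
      = Real.exp (-A) := by
    rw [← Real.exp_add]
    congr 1
    rw [hldef, hAdef]
    field_simp
    ring
  have hP1 : P {ω | t ≤ ∑ i, X i ω} ≤ ENNReal.ofReal (Real.exp (-A)) := by
    have h := hch1.trans (le_of_le_of_eq
      (mul_le_mul_of_nonneg_left hmgfW (Real.exp_pos _).le) hkey)
    calc P {ω | t ≤ ∑ i, X i ω}
        = ENNReal.ofReal ((P {ω | t ≤ ∑ i, X i ω}).toReal) :=
        (ENNReal.ofReal_toReal (measure_ne_top _ _)).symm
    _ ≤ ENNReal.ofReal (Real.exp (-A)) := ENNReal.ofReal_le_ofReal h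
  have hP2 : P {ω | t ≤ ∑ i, X' i ω} ≤ ENNReal.ofReal (Real.exp (-A)) := by
    have h := hch2.trans (le_of_le_of_eq
      (mul_le_mul_of_nonneg_left hmgfW' (Real.exp_pos _).le) hkey)
    calc P {ω | t ≤ ∑ i, X' i ω}
        = ENNReal.ofReal ((P {ω | t ≤ ∑ i, X' i ω}).toReal) :=
        (ENNReal.ofReal_toReal (measure_ne_top _ _)).symm
    _ ≤ ENNReal.ofReal (Real.exp (-A)) := ENNReal.ofReal_le_ofReal h
  have hsub : {ω | t < |∑ i, X i ω|}
      ⊆ {ω | t ≤ ∑ i, X i ω} ∪ {ω | t ≤ ∑ i, X' i ω} := by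
    intro ω hω
    have hω' : t < |∑ i, X i ω| := hω
    rcases lt_abs.1 hω' with h | h
    · exact Or.inl h.le
    · exact Or.inr (by rw [Set.mem_setOf_eq, hsum' ω]; exact h.le)
  set B : ℝ := t / ((n : ℝ) * x) * Real.sqrt (6 / Real.exp 1) with hBdef
  have hA0 : 0 ≤ A := by positivity
  have hB0 : 0 ≤ B := by
    rw [hBdef]
    have : 0 ≤ t / ((n:ℝ) * x) := div_nonneg ht0.le (by positivity)
    positivity
  have hfinal : 2 * Real.exp (-A) ≤ Real.exp 1 * Real.exp (-A * (1 - B)) := by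
    have h1 : Real.exp (-A) ≤ Real.exp (-A * (1 - B)) := by
      refine Real.exp_le_exp.2 ?_
      nlinarith
    calc 2 * Real.exp (-A) ≤ Real.exp 1 * Real.exp (-A) :=
        mul_le_mul_of_nonneg_right h2le (Real.exp_pos _).le
    _ ≤ Real.exp 1 * Real.exp (-A * (1 - B)) :=
        mul_le_mul_of_nonneg_left h1 (Real.exp_pos _).le
  calc P {ω | t < |∑ i, X i ω|}
      ≤ P ({ω | t ≤ ∑ i, X i ω} ∪ {ω | t ≤ ∑ i, X' i ω}) := measure_mono hsub
  _ ≤ P {ω | t ≤ ∑ i, X i ω} + P {ω | t ≤ ∑ i, X' i ω} := measure_union_le _ _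
  _ ≤ ENNReal.ofReal (Real.exp (-A)) + ENNReal.ofReal (Real.exp (-A)) := add_le_add hP1 hP2
  _ = ENNReal.ofReal (2 * Real.exp (-A)) := by
      rw [← ENNReal.ofReal_add (Real.exp_pos _).le (Real.exp_pos _).le]; ring_nf
  _ ≤ ENNReal.ofReal (Real.exp 1 * Real.exp (-A * (1 - B))) := ENNReal.ofReal_le_ofReal hfinal
end

section
/- Let W ≥ 0 be a random variable with μ := E[W] ∈ (0,∞), and let W^s be a random variable on the same probability space having the size-bias distribution of W, i.e. E[f(W^s)] = E[W f(W)]/μ for all measurable f : ℝ → ℝ for which the right-hand side is well defined. Suppose |W^s − W| ≤ c almost surely for a constant c > 0. Then for all t ≥ √(2 e μ c), P(|W − μ| > t) ≤ e·exp{−(t²/(2 e μ c))·(1 − (t/μ)·√(6/e))}. -/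
open MeasureTheory ProbabilityTheory Real

/-- `Ws` has the size-bias distribution of `W` (on a common probability space):
`E[f(Ws)] = E[W·f(W)]/μ` for all measurable `f` for which the right-hand side is
well defined, where `μ = E[W]`. -/
def IsSizeBiasCoupling {Ω : Type*} [MeasurableSpace Ω] (P : Measure Ω)
    (W Ws : Ω → ℝ) : Prop :=
  ∀ f : ℝ → ℝ, Measurable f →
    Integrable (fun ω => W ω * f (W ω)) P →
    ∫ ω, f (Ws ω) ∂P = (∫ ω, W ω * f (W ω) ∂P) / ∫ x, W x ∂P

lemma exp_lip_neg {a b : ℝ} (ha : a ≤ 0) (hb : b ≤ 0) : |Real.exp a - Real.exp b| ≤ |a - b| := by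
  wlog h : b ≤ a generalizing a b
  · rw [abs_sub_comm, abs_sub_comm a b]; exact this hb ha (le_of_not_ge h)
  have h1 : Real.exp b ≤ Real.exp a := Real.exp_le_exp.2 h
  have h2 : Real.exp a ≤ 1 := Real.exp_le_one_iff.2 ha
  have h3 : (b - a) + 1 ≤ Real.exp (b - a) := by linarith [Real.add_one_le_exp (b - a)]
  have h4 : Real.exp b = Real.exp (b - a) * Real.exp a := by rw [← Real.exp_add]; ring_nf
  rw [abs_of_nonneg (by linarith), abs_of_nonneg (by linarith)]
  nlinarith [Real.exp_pos a]

lemma exp_quad_bound {x : ℝ} (hx : |x| ≤ 1) : Real.exp x ≤ 1 + x + (3/4) * x^2 := by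
  have h := Real.exp_bound hx (by norm_num : 0 < 2)
  simp [Finset.sum_range_succ] at h
  rw [abs_sub_le_iff] at h
  have := h.1
  have hx2 : |x|^2 = x^2 := sq_abs x
  norm_num at this
  nlinarith [this]

lemma mgf_upper {Ω : Type*} [MeasurableSpace Ω] (P : Measure Ω) [IsProbabilityMeasure P]
    (W Ws : Ω → ℝ) (hWm : Measurable W) (hWsm : Measurable Ws)
    (hWpos : ∀ᵐ ω ∂P, 0 ≤ W ω)
    (hWint : Integrable W P) (hμpos : 0 < ∫ x, W x ∂P)
    (hSB : IsSizeBiasCoupling P W Ws)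
    (c : ℝ) (hc : 0 < c) (hub : ∀ᵐ ω ∂P, Ws ω ≤ W ω + c)
    (M : ℝ) (hM : 0 ≤ M) (θ : ℝ) (hθ : 0 ≤ θ) :
    ∫ ω, Real.exp (θ * min (W ω) M) ∂P
      ≤ Real.exp ((∫ x, W x ∂P) * (Real.exp (θ * c) - 1) / c) := by
  set μ : ℝ := ∫ x, W x ∂P with hμ
  set G : ℝ → ℝ := fun u => ∫ ω, Real.exp (u * min (W ω) M) ∂P with hG
  set D : ℝ → ℝ := fun u => ∫ ω, Real.exp (u * min (W ω) M) * min (W ω) M ∂P with hD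
  have hmWmeas : Measurable (fun ω => min (W ω) M) := hWm.min measurable_const
  have hmW_ae : ∀ᵐ ω ∂P, 0 ≤ min (W ω) M ∧ min (W ω) M ≤ M := by
    filter_upwards [hWpos] with ω hω
    exact ⟨le_min hω hM, min_le_right _ _⟩
  -- integrability of exp(u * min W M)
  have hGint : ∀ u : ℝ, Integrable (fun ω => Real.exp (u * min (W ω) M)) P := by
    intro u
    refine (integrable_const (Real.exp (|u| * M))).mono'
      ((Real.measurable_exp.comp (hmWmeas.const_mul u)).aestronglyMeasurable) ?_
    filter_upwards [hmW_ae] with ω ⟨h0, h1⟩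
    rw [Real.norm_eq_abs, abs_of_pos (Real.exp_pos _), Real.exp_le_exp]
    calc u * min (W ω) M ≤ |u| * min (W ω) M := by
          exact mul_le_mul_of_nonneg_right (le_abs_self u) h0
      _ ≤ |u| * M := mul_le_mul_of_nonneg_left h1 (abs_nonneg u)
  -- derivative of G
  have hGderiv : ∀ u : ℝ, HasDerivAt G (D u) u := by
    intro u
    have key := hasDerivAt_integral_of_dominated_loc_of_deriv_le
      (F := fun x ω => Real.exp (x * min (W ω) M))
      (F' := fun x ω => Real.exp (x * min (W ω) M) * min (W ω) M)
      (bound := fun _ => Real.exp ((|u| + 1) * M) * M)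
      (μ := P) (x₀ := u) (Metric.ball_mem_nhds u one_pos)
      (Filter.Eventually.of_forall fun x =>
        ((Real.measurable_exp.comp (hmWmeas.const_mul x)).aestronglyMeasurable))
      (hGint u)
      (((Real.measurable_exp.comp (hmWmeas.const_mul u)).mul hmWmeas).aestronglyMeasurable)
      ?_ (integrable_const _) ?_
    · exact key.2
    · filter_upwards [hmW_ae] with ω ⟨h0, h1⟩ x hx
      rw [Real.norm_eq_abs, abs_of_nonneg (mul_nonneg (Real.exp_pos _).le h0)]
      have hxabs : |x| ≤ |u| + 1 := by
        have := mem_ball_iff_norm.1 hx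
        have : |x - u| < 1 := by simpa [Real.norm_eq_abs] using this
        calc |x| = |x - u + u| := by ring_nf
          _ ≤ |x - u| + |u| := abs_add_le _ _
          _ ≤ |u| + 1 := by linarith
      have : Real.exp (x * min (W ω) M) ≤ Real.exp ((|u| + 1) * M) := by
        rw [Real.exp_le_exp]
        calc x * min (W ω) M ≤ |x| * min (W ω) M := mul_le_mul_of_nonneg_right (le_abs_self x) h0
          _ ≤ (|u| + 1) * M := mul_le_mul hxabs h1 h0 (by positivity)
      exact mul_le_mul this h1 h0 (Real.exp_pos _).le
    · filter_upwards with ω x _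
      have h1 : HasDerivAt (fun x : ℝ => x * min (W ω) M) (min (W ω) M) x := hasDerivAt_mul_const _
      simpa [mul_comm, Function.comp_def] using (Real.hasDerivAt_exp (x * min (W ω) M)).comp x h1
  have hμpos' : 0 < μ := hμpos
  -- integrability of W * exp(u * min W M)
  have hWe_int : ∀ u : ℝ, 0 ≤ u → Integrable (fun ω => W ω * Real.exp (u * min (W ω) M)) P := by
    intro u hu
    refine (hWint.abs.mul_const (Real.exp (u * M))).mono'
      ((hWm.mul (Real.measurable_exp.comp (hmWmeas.const_mul u))).aestronglyMeasurable) ?_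
    filter_upwards [hmW_ae] with ω ⟨h0, h1⟩
    rw [Real.norm_eq_abs, abs_mul, abs_of_pos (Real.exp_pos _)]
    exact mul_le_mul_of_nonneg_left
      (Real.exp_le_exp.2 (mul_le_mul_of_nonneg_left h1 hu)) (abs_nonneg _)
  -- main differential inequality
  have hkey : ∀ u : ℝ, 0 ≤ u → D u ≤ μ * Real.exp (u * c) * G u := by
    intro u hu
    have step1 : D u ≤ ∫ ω, W ω * Real.exp (u * min (W ω) M) ∂P := by
      rw [hD]
      refine integral_mono_ae ?_ (hWe_int u hu) ?_
      · refine (hGint u).mul_const' M |>.mono'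
          ((Real.measurable_exp.comp (hmWmeas.const_mul u)).mul hmWmeas).aestronglyMeasurable ?_
        filter_upwards [hmW_ae] with ω ⟨h0, h1⟩
        rw [Real.norm_eq_abs, abs_of_nonneg (mul_nonneg (Real.exp_pos _).le h0)]
        exact mul_le_mul_of_nonneg_left h1 (Real.exp_pos _).le
      · filter_upwards with ω
        calc Real.exp (u * min (W ω) M) * min (W ω) M
            ≤ Real.exp (u * min (W ω) M) * W ω :=
              mul_le_mul_of_nonneg_left (min_le_left _ _) (Real.exp_pos _).le
          _ = W ω * Real.exp (u * min (W ω) M) := mul_comm _ _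
    have step2 : ∫ ω, W ω * Real.exp (u * min (W ω) M) ∂P
        = μ * ∫ ω, Real.exp (u * min (Ws ω) M) ∂P := by
      have hSBu := hSB (fun w => Real.exp (u * min w M))
        (Real.measurable_exp.comp ((measurable_id.min measurable_const).const_mul u))
        (hWe_int u hu)
      rw [← hμ] at hSBu
      field_simp at hSBu ⊢
      rw [← hSBu]
    have step3 : ∫ ω, Real.exp (u * min (Ws ω) M) ∂P ≤ Real.exp (u * c) * G u := by
      have hWs_int : Integrable (fun ω => Real.exp (u * min (Ws ω) M)) P := by
        refine (integrable_const (Real.exp (u * M))).mono'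
          ((Real.measurable_exp.comp ((hWsm.min measurable_const).const_mul u)).aestronglyMeasurable) ?_
        filter_upwards with ω
        rw [Real.norm_eq_abs, abs_of_pos (Real.exp_pos _), Real.exp_le_exp]
        exact mul_le_mul_of_nonneg_left (min_le_right _ _) hu
      have : ∫ ω, Real.exp (u * c) * Real.exp (u * min (W ω) M) ∂P
          = Real.exp (u * c) * G u := by
        rw [hG]; exact integral_const_mul _ _
      rw [← this]
      refine integral_mono_ae hWs_int ((hGint u).const_mul _) ?_
      filter_upwards [hub] with ω hω
      rw [← Real.exp_add, Real.exp_le_exp]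
      have hmin : min (Ws ω) M ≤ min (W ω) M + c := by
        calc min (Ws ω) M ≤ min (W ω + c) M := min_le_min hω le_rfl
          _ ≤ min (W ω + c) (M + c) := min_le_min le_rfl (by linarith)
          _ = min (W ω) M + c := by rw [min_add_add_right]
      calc u * min (Ws ω) M ≤ u * (min (W ω) M + c) := mul_le_mul_of_nonneg_left hmin hu
        _ = u * c + u * min (W ω) M := by ring
    calc D u ≤ ∫ ω, W ω * Real.exp (u * min (W ω) M) ∂P := step1
      _ = μ * ∫ ω, Real.exp (u * min (Ws ω) M) ∂P := step2
      _ ≤ μ * (Real.exp (u * c) * G u) :=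
          mul_le_mul_of_nonneg_left step3 hμpos'.le
      _ = μ * Real.exp (u * c) * G u := by ring
  -- the Gronwall-type function
  set B : ℝ → ℝ := fun u => μ * (Real.exp (u * c) - 1) / c with hB
  have hBderiv : ∀ u : ℝ, HasDerivAt B (μ * Real.exp (u * c)) u := by
    intro u
    have h1 : HasDerivAt (fun u : ℝ => Real.exp (u * c)) (Real.exp (u * c) * c) u := by
      simpa [mul_comm, Function.comp_def] using (Real.hasDerivAt_exp (u * c)).comp u (hasDerivAt_mul_const c)
    have h2 := ((h1.sub_const 1).const_mul μ).div_const c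
    rw [show μ * Real.exp (u * c) = μ * (Real.exp (u * c) * c) / c by
      rw [mul_div_assoc, mul_div_cancel_right₀ _ hc.ne']]
    exact h2
  set Φ : ℝ → ℝ := fun u => G u * Real.exp (-(B u)) with hΦ
  have hΦderiv : ∀ u : ℝ, HasDerivAt Φ
      (D u * Real.exp (-(B u)) + G u * (Real.exp (-(B u)) * (-(μ * Real.exp (u * c))))) u := by
    intro u
    exact (hGderiv u).mul ((Real.hasDerivAt_exp _).comp u (hBderiv u).neg)
  have hGnn : ∀ u : ℝ, 0 ≤ G u := by
    intro u; rw [hG]; exact integral_nonneg fun ω => (Real.exp_pos _).le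
  have hanti : AntitoneOn Φ (Set.Icc 0 θ) := by
    refine antitoneOn_of_deriv_nonpos (convex_Icc _ _)
      (fun u _ => (hΦderiv u).continuousAt.continuousWithinAt)
      (fun u _ => (hΦderiv u).differentiableAt.differentiableWithinAt) ?_
    intro u hu
    rw [interior_Icc] at hu
    rw [(hΦderiv u).deriv]
    have h1 := hkey u hu.1.le
    have h2 := Real.exp_pos (-(B u))
    nlinarith [hGnn u]
  have hΦ0 : Φ 0 = 1 := by
    have : G 0 = 1 := by rw [hG]; simp
    rw [hΦ]; simp [this, hB]
  have hend : Φ θ ≤ 1 := by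
    rw [← hΦ0]
    exact hanti (Set.left_mem_Icc.2 hθ) (Set.right_mem_Icc.2 hθ) hθ
  have := mul_le_mul_of_nonneg_right hend (Real.exp_pos (B θ)).le
  rw [hΦ] at this
  simp only [one_mul] at this
  rw [mul_assoc, ← Real.exp_add, neg_add_cancel, Real.exp_zero, mul_one] at this
  simpa [hB] using this

lemma mgf_lower {Ω : Type*} [MeasurableSpace Ω] (P : Measure Ω) [IsProbabilityMeasure P]
    (W Ws : Ω → ℝ) (hWm : Measurable W) (hWsm : Measurable Ws)
    (hWpos : ∀ᵐ ω ∂P, 0 ≤ W ω)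
    (hWint : Integrable W P) (hμpos : 0 < ∫ x, W x ∂P)
    (hSB : IsSizeBiasCoupling P W Ws)
    (c : ℝ) (hc : 0 < c)
    (hub : ∀ᵐ ω ∂P, Ws ω ≤ W ω + c) (hlb : ∀ᵐ ω ∂P, W ω - c ≤ Ws ω)
    (l : ℝ) (hl : 0 ≤ l) :
    ∫ ω, Real.exp (-l * W ω) ∂P
      ≤ Real.exp ((∫ x, W x ∂P) * (Real.exp (-l * c) - 1) / c) := by
  set μ : ℝ := ∫ x, W x ∂P with hμ
  have hμpos' : 0 < μ := hμpos
  set G : ℝ → ℝ := fun u => ∫ ω, Real.exp (u * W ω) ∂P with hG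
  set D : ℝ → ℝ := fun u => ∫ ω, Real.exp (u * W ω) * W ω ∂P with hD
  -- integrability for u ≤ 0
  have hGint : ∀ u : ℝ, u ≤ 0 → Integrable (fun ω => Real.exp (u * W ω)) P := by
    intro u hu
    refine (integrable_const (1 : ℝ)).mono'
      ((Real.measurable_exp.comp (hWm.const_mul u)).aestronglyMeasurable) ?_
    filter_upwards [hWpos] with ω h0
    rw [Real.norm_eq_abs, abs_of_pos (Real.exp_pos _)]
    exact Real.exp_le_one_iff.2 (mul_nonpos_of_nonpos_of_nonneg hu h0)
  have hDint : ∀ u : ℝ, u ≤ 0 → Integrable (fun ω => Real.exp (u * W ω) * W ω) P := by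
    intro u hu
    refine hWint.abs.mono'
      (((Real.measurable_exp.comp (hWm.const_mul u)).mul hWm).aestronglyMeasurable) ?_
    filter_upwards [hWpos] with ω h0
    rw [Real.norm_eq_abs, abs_mul, abs_of_pos (Real.exp_pos _), abs_of_nonneg h0]
    have : Real.exp (u * W ω) ≤ 1 := Real.exp_le_one_iff.2 (mul_nonpos_of_nonpos_of_nonneg hu h0)
    calc Real.exp (u * W ω) * W ω ≤ 1 * W ω := mul_le_mul_of_nonneg_right this h0
      _ = W ω := one_mul _
  -- derivative of G at u < 0
  have hGderiv : ∀ u : ℝ, u < 0 → HasDerivAt G (D u) u := by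
    intro u hu
    have hε : 0 < -u / 2 := by linarith
    have key := hasDerivAt_integral_of_dominated_loc_of_deriv_le
      (F := fun x ω => Real.exp (x * W ω))
      (F' := fun x ω => Real.exp (x * W ω) * W ω)
      (bound := fun ω => |W ω|)
      (μ := P) (x₀ := u) (Metric.ball_mem_nhds u hε)
      (Filter.Eventually.of_forall fun x =>
        ((Real.measurable_exp.comp (hWm.const_mul x)).aestronglyMeasurable))
      (hGint u hu.le)
      (((Real.measurable_exp.comp (hWm.const_mul u)).mul hWm).aestronglyMeasurable)
      ?_ hWint.abs ?_
    · exact key.2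
    · filter_upwards [hWpos] with ω h0 x hx
      have hx0 : x ≤ 0 := by
        have := mem_ball_iff_norm.1 hx
        rw [Real.norm_eq_abs, abs_lt] at this
        linarith [this.2]
      rw [Real.norm_eq_abs, abs_mul, abs_of_pos (Real.exp_pos _), abs_of_nonneg h0]
      have : Real.exp (x * W ω) ≤ 1 :=
        Real.exp_le_one_iff.2 (mul_nonpos_of_nonpos_of_nonneg hx0 h0)
      calc Real.exp (x * W ω) * W ω ≤ 1 * W ω := mul_le_mul_of_nonneg_right this h0
        _ = W ω := one_mul _
    · filter_upwards with ω x _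
      have h1 : HasDerivAt (fun x : ℝ => x * W ω) (W ω) x := hasDerivAt_mul_const _
      simpa [mul_comm, Function.comp_def] using (Real.hasDerivAt_exp (x * W ω)).comp x h1
  -- continuity of G on Icc (-l) 0 via Lipschitz
  have hGcont : ContinuousOn G (Set.Icc (-l) 0) := by
    have : LipschitzOnWith (∫ ω, |W ω| ∂P).toNNReal G (Set.Icc (-l) 0) := by
      refine LipschitzOnWith.of_dist_le_mul fun u hu v hv => ?_
      rw [Real.dist_eq, Real.dist_eq]
      have hsub : G u - G v = ∫ ω, (Real.exp (u * W ω) - Real.exp (v * W ω)) ∂P := by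
        rw [hG]; exact (integral_sub (hGint u hu.2) (hGint v hv.2)).symm
      rw [hsub]
      calc |∫ ω, (Real.exp (u * W ω) - Real.exp (v * W ω)) ∂P|
          ≤ ∫ ω, |Real.exp (u * W ω) - Real.exp (v * W ω)| ∂P := by
            simpa [Real.norm_eq_abs] using
              norm_integral_le_integral_norm (fun ω => Real.exp (u * W ω) - Real.exp (v * W ω))
        _ ≤ ∫ ω, |W ω| * |u - v| ∂P := by
            refine integral_mono_ae ((hGint u hu.2).sub (hGint v hv.2)).abs
              (hWint.abs.mul_const _) ?_
            filter_upwards [hWpos] with ω h0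
            have := exp_lip_neg (mul_nonpos_of_nonpos_of_nonneg hu.2 h0)
              (mul_nonpos_of_nonpos_of_nonneg hv.2 h0)
            calc |Real.exp (u * W ω) - Real.exp (v * W ω)| ≤ |u * W ω - v * W ω| := this
              _ = |W ω| * |u - v| := by rw [← abs_mul]; ring_nf
        _ = (∫ ω, |W ω| ∂P) * |u - v| := integral_mul_const _ _
        _ ≤ (∫ ω, |W ω| ∂P).toNNReal * |u - v| := by
            gcongr
            exact Real.le_coe_toNNReal _
    exact this.continuousOn
  -- differential inequality: D u ≥ μ exp(uc) G u on interior
  have hkey : ∀ u : ℝ, -l ≤ u → u < 0 → μ * Real.exp (u * c) * G u ≤ D u := by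
    intro u hul hu0
    have hint : Integrable (fun ω => W ω * Real.exp (u * W ω)) P := by
      have := hDint u hu0.le
      simpa [mul_comm] using this
    have hSBu := hSB (fun w => Real.exp (u * w))
      (Real.measurable_exp.comp (measurable_id.const_mul u)) hint
    rw [← hμ] at hSBu
    have step2 : D u = μ * ∫ ω, Real.exp (u * Ws ω) ∂P := by
      have hDeq : D u = ∫ ω, W ω * Real.exp (u * W ω) ∂P := by
        simp only [hD]
        exact integral_congr_ae (Filter.Eventually.of_forall fun ω => mul_comm _ _)
      rw [hDeq]
      field_simp at hSBu ⊢
      rw [← hSBu]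
    have hWs_int : Integrable (fun ω => Real.exp (u * Ws ω)) P := by
      refine (integrable_const (Real.exp (-u * c))).mono'
        ((Real.measurable_exp.comp (hWsm.const_mul u)).aestronglyMeasurable) ?_
      filter_upwards [hlb, hWpos] with ω hω h0
      rw [Real.norm_eq_abs, abs_of_pos (Real.exp_pos _), Real.exp_le_exp]
      have : -c ≤ Ws ω := by linarith
      nlinarith
    have step3 : Real.exp (u * c) * G u ≤ ∫ ω, Real.exp (u * Ws ω) ∂P := by
      have hre : ∫ ω, Real.exp (u * c) * Real.exp (u * W ω) ∂P
          = Real.exp (u * c) * G u := by rw [hG]; exact integral_const_mul _ _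
      rw [← hre]
      refine integral_mono_ae ((hGint u hu0.le).const_mul _) hWs_int ?_
      filter_upwards [hub] with ω hω
      rw [← Real.exp_add, Real.exp_le_exp]
      nlinarith
    rw [step2]
    calc μ * Real.exp (u * c) * G u = μ * (Real.exp (u * c) * G u) := by ring
      _ ≤ μ * ∫ ω, Real.exp (u * Ws ω) ∂P := mul_le_mul_of_nonneg_left step3 hμpos'.le
  -- Gronwall
  set B : ℝ → ℝ := fun u => μ * (Real.exp (u * c) - 1) / c with hB
  have hBderiv : ∀ u : ℝ, HasDerivAt B (μ * Real.exp (u * c)) u := by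
    intro u
    have h1 : HasDerivAt (fun u : ℝ => Real.exp (u * c)) (Real.exp (u * c) * c) u := by
      simpa [mul_comm, Function.comp_def] using (Real.hasDerivAt_exp (u * c)).comp u (hasDerivAt_mul_const c)
    have h2 := ((h1.sub_const 1).const_mul μ).div_const c
    rw [show μ * Real.exp (u * c) = μ * (Real.exp (u * c) * c) / c by
      rw [mul_div_assoc, mul_div_cancel_right₀ _ hc.ne']]
    exact h2
  set Φ : ℝ → ℝ := fun u => G u * Real.exp (-(B u)) with hΦ
  have hΦderiv : ∀ u : ℝ, u < 0 → HasDerivAt Φ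
      (D u * Real.exp (-(B u)) + G u * (Real.exp (-(B u)) * (-(μ * Real.exp (u * c))))) u := by
    intro u hu
    exact (hGderiv u hu).mul ((Real.hasDerivAt_exp _).comp u (hBderiv u).neg)
  have hBcont : Continuous B := by
    rw [hB]; fun_prop
  have hmono : MonotoneOn Φ (Set.Icc (-l) 0) := by
    refine monotoneOn_of_deriv_nonneg (convex_Icc _ _)
      (hGcont.mul (Real.continuous_exp.comp hBcont.neg).continuousOn)
      ?_ ?_
    · intro u hu
      rw [interior_Icc] at hu
      exact (hΦderiv u hu.2).differentiableAt.differentiableWithinAt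
    · intro u hu
      rw [interior_Icc] at hu
      rw [(hΦderiv u hu.2).deriv]
      have h1 := hkey u hu.1.le hu.2
      have h2 := Real.exp_pos (-(B u))
      nlinarith
  have hΦ0 : Φ 0 = 1 := by
    have hG0 : G 0 = 1 := by rw [hG]; simp
    rw [hΦ]; simp [hG0, hB]
  have hend : Φ (-l) ≤ 1 := by
    rw [← hΦ0]
    exact hmono (Set.left_mem_Icc.2 (by linarith)) (Set.right_mem_Icc.2 (by linarith)) (by linarith)
  have h2 := mul_le_mul_of_nonneg_right hend (Real.exp_pos (B (-l))).le
  rw [hΦ] at h2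
  simp only [one_mul] at h2
  rw [mul_assoc, ← Real.exp_add, neg_add_cancel, Real.exp_zero, mul_one] at h2
  have hGeq : G (-l) = ∫ ω, Real.exp (-l * W ω) ∂P := by rw [hG]
  rw [hGeq] at h2
  simpa [hB] using h2

lemma final_ineq {E q s : ℝ} (hE : 2 ≤ E) (hqs : 0 ≤ q * s) :
    2 * Real.exp (-q) ≤ E * Real.exp (-q * (1 - s)) := by
  have hsplit : Real.exp (-q * (1 - s)) = Real.exp (-q) * Real.exp (q * s) := by
    rw [← Real.exp_add]; ring_nf
  rw [hsplit]
  have h1 : (1:ℝ) ≤ Real.exp (q * s) := Real.one_le_exp hqs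
  calc 2 * Real.exp (-q) = 2 * (Real.exp (-q) * 1) := by ring
    _ ≤ E * (Real.exp (-q) * Real.exp (q * s)) := by
        refine mul_le_mul hE ?_ (by positivity) (by linarith)
        exact mul_le_mul_of_nonneg_left h1 (Real.exp_pos _).le

lemma numeric_upper {E m c t : ℝ} (hE : 2 ≤ E) (hm : 0 < m) (hc : 0 < c) (ht : 0 < t)
    (hexp : Real.exp (t/(E*m)) ≤ 1 + t/(E*m) + (3/4)*(t/(E*m))^2) :
    m * (Real.exp (t/(E*m)) - 1)/c - t/(E*m*c)*(m+t) ≤ -(t^2/(2*E*m*c)) := by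
  have hE0 : (0:ℝ) < E := by linarith
  have h1 : m * (Real.exp (t/(E*m)) - 1)/c ≤ m * (t/(E*m) + (3/4)*(t/(E*m))^2)/c := by
    gcongr
    linarith
  have heq : m * (t/(E*m) + (3/4)*(t/(E*m))^2)/c - t/(E*m*c)*(m+t)
      = (3/(4*E) - 1) * (t^2/(E*m*c)) := by
    field_simp
    ring
  have heq2 : t^2/(2*E*m*c) = (1/2) * (t^2/(E*m*c)) := by
    field_simp
  have hX : 0 < t^2/(E*m*c) := by positivity
  have h3 : 3/(4*E) ≤ 1/2 := by
    rw [div_le_iff₀ (by positivity)]; linarith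
  nlinarith

lemma numeric_lower {E m c t : ℝ} (hE : 2 ≤ E) (hm : 0 < m) (hc : 0 < c) (ht : 0 < t)
    (hexp : Real.exp (-(t/m)) ≤ 1 + (-(t/m)) + (3/4)*(-(t/m))^2) :
    m * (Real.exp (-(t/m)) - 1)/c + t/(m*c)*(m-t) ≤ -(t^2/(2*E*m*c)) := by
  have hE0 : (0:ℝ) < E := by linarith
  have hsq : (-(t/m))^2 = (t/m)^2 := by ring
  have h1 : m * (Real.exp (-(t/m)) - 1)/c ≤ m * (-(t/m) + (3/4)*(t/m)^2)/c := by
    gcongr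
    rw [hsq] at hexp
    linarith
  have heq : m * (-(t/m) + (3/4)*(t/m)^2)/c + t/(m*c)*(m-t)
      = -(1/4) * (t^2/(m*c)) := by
    field_simp
    ring
  have heq2 : t^2/(2*E*m*c) = (1/(2*E)) * (t^2/(m*c)) := by
    field_simp
  have hX : 0 < t^2/(m*c) := by positivity
  have h3 : 1/(2*E) ≤ 1/4 := by
    rw [div_le_iff₀ (by positivity)]; linarith
  nlinarith

/-- Concentration from a bounded size-bias coupling. -/
theorem stmt_15 {Ω : Type*} [MeasurableSpace Ω] (P : Measure Ω) [IsProbabilityMeasure P]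
    (W Ws : Ω → ℝ) (hWm : Measurable W) (hWsm : Measurable Ws)
    (hWpos : ∀ᵐ ω ∂P, 0 ≤ W ω)
    (hWint : Integrable W P) (hμpos : 0 < ∫ x, W x ∂P)
    (hSB : IsSizeBiasCoupling P W Ws)
    (c : ℝ) (hc : 0 < c) (hbdd : ∀ᵐ ω ∂P, |Ws ω - W ω| ≤ c)
    (t : ℝ) (ht : Real.sqrt (2 * Real.exp 1 * (∫ x, W x ∂P) * c) ≤ t) :
    P {ω | t < |W ω - ∫ x, W x ∂P|}
      ≤ ENNReal.ofReal (Real.exp 1 *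
          Real.exp (-(t ^ 2 / (2 * Real.exp 1 * (∫ x, W x ∂P) * c))
            * (1 - t / (∫ x, W x ∂P) * Real.sqrt (6 / Real.exp 1)))) := by
  set μ : ℝ := ∫ x, W x ∂P with hμdef
  have hμpos' : 0 < μ := hμpos
  have hμ0 : (0:ℝ) < ∫ x, W x ∂P := hμdef ▸ hμpos'
  clear_value μ
  have hE1 : (0:ℝ) < Real.exp 1 := Real.exp_pos 1
  have he2 : (2:ℝ) ≤ Real.exp 1 := by nlinarith [Real.add_one_le_exp 1]
  have he6 : Real.exp 1 ≤ 6 := by nlinarith [Real.exp_one_lt_d9]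
  have hprod : 0 < 2 * Real.exp 1 * μ * c := by positivity
  have htpos : 0 < t := lt_of_lt_of_le (Real.sqrt_pos.2 hprod) ht
  set q : ℝ := t ^ 2 / (2 * Real.exp 1 * μ * c) with hq
  have hqpos : 0 < q := by rw [hq]; positivity
  set s : ℝ := t / μ * Real.sqrt (6 / Real.exp 1) with hs
  clear_value q s
  have hspos : 0 < s := by
    rw [hs]
    have h6 : (0:ℝ) < 6 / Real.exp 1 := by positivity
    positivity
  by_cases hcase : 1 ≤ s
  · -- trivial case
    have h1 : (1:ℝ) ≤ Real.exp 1 * Real.exp (-q * (1 - s)) := by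
      have h0 : 0 ≤ -q * (1 - s) := by nlinarith
      have h2 := Real.one_le_exp h0
      nlinarith
    calc P {ω | t < |W ω - μ|} ≤ 1 := prob_le_one
      _ ≤ ENNReal.ofReal (Real.exp 1 * Real.exp (-q * (1 - s))) := by
          rw [← ENNReal.ofReal_one]; exact ENNReal.ofReal_le_ofReal h1
  · push_neg at hcase
    have hsq6 : 1 ≤ Real.sqrt (6 / Real.exp 1) := by
      have h16 : (1:ℝ) ≤ 6 / Real.exp 1 := by rw [le_div_iff₀ hE1]; linarith
      calc (1:ℝ) = Real.sqrt 1 := Real.sqrt_one.symm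
        _ ≤ Real.sqrt (6 / Real.exp 1) := Real.sqrt_le_sqrt h16
    have htμ : t / μ < 1 := by
      have : t / μ ≤ s := by
        rw [hs]
        nlinarith [div_pos htpos hμpos']
      linarith
    have htμ' : t < μ := (div_lt_one hμpos').1 htμ
    -- a.e. bounds on the coupling
    have hub : ∀ᵐ ω ∂P, Ws ω ≤ W ω + c := by
      filter_upwards [hbdd] with ω h; have := abs_le.1 h; linarith [this.2]
    have hlb : ∀ᵐ ω ∂P, W ω - c ≤ Ws ω := by
      filter_upwards [hbdd] with ω h; have := abs_le.1 h; linarith [this.1]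
    set θ : ℝ := t / (Real.exp 1 * μ * c) with hθ
    set lam : ℝ := t / (μ * c) with hlam
    clear_value θ lam
    have hθpos : 0 < θ := by rw [hθ]; positivity
    have hlampos : 0 < lam := by rw [hlam]; positivity
    -- MGF bounds
    have hU := mgf_upper P W Ws hWm hWsm hWpos hWint hμ0 hSB c hc hub
      (μ + t) (by positivity) θ hθpos.le
    have hL := mgf_lower P W Ws hWm hWsm hWpos hWint hμ0 hSB c hc hub hlb
      lam hlampos.le
    rw [← hμdef] at hU hL
    -- numeric upper exponent bound
    have hθc : θ * c = t / (Real.exp 1 * μ) := by rw [hθ]; field_simp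
    have numeric1 : μ * (Real.exp (θ * c) - 1) / c - θ * (μ + t) ≤ -q := by
      rw [hθc, hθ, hq]
      have habs : |t / (Real.exp 1 * μ)| ≤ 1 := by
        rw [abs_of_nonneg (by positivity), div_le_one (by positivity)]
        nlinarith
      exact numeric_upper he2 hμpos' hc htpos (exp_quad_bound habs)
    -- numeric lower exponent bound
    have hlamc : -lam * c = -(t / μ) := by rw [hlam]; field_simp
    have numeric2 : μ * (Real.exp (-lam * c) - 1) / c + lam * (μ - t) ≤ -q := by
      rw [hlamc, hlam, hq]
      have habs : |(-(t / μ))| ≤ 1 := by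
        rw [abs_neg, abs_of_nonneg (by positivity)]
        linarith
      exact numeric_lower he2 hμpos' hc htpos (exp_quad_bound habs)
    -- Markov, upper tail
    set f1 : Ω → ℝ := fun ω => Real.exp (θ * min (W ω) (μ + t)) with hf1
    have hf1int : Integrable f1 P := by
      refine (integrable_const (Real.exp (θ * (μ + t)))).mono'
        ((Real.measurable_exp.comp ((hWm.min measurable_const).const_mul θ)).aestronglyMeasurable) ?_
      filter_upwards with ω
      rw [hf1, Real.norm_eq_abs, abs_of_pos (Real.exp_pos _), Real.exp_le_exp]
      exact mul_le_mul_of_nonneg_left (min_le_right _ _) hθpos.le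
    have hmark1 := mul_meas_ge_le_integral_of_nonneg
      (ae_of_all P fun ω => (Real.exp_pos (θ * min (W ω) (μ + t))).le) hf1int
      (Real.exp (θ * (μ + t)))
    have hP1 : P {x | Real.exp (θ * (μ + t)) ≤ f1 x} ≤ ENNReal.ofReal (Real.exp (-q)) := by
      rw [ENNReal.le_ofReal_iff_toReal_le (measure_ne_top _ _) (Real.exp_pos _).le]
      have hle : (P {x | Real.exp (θ * (μ + t)) ≤ f1 x}).toReal
          ≤ Real.exp (μ * (Real.exp (θ * c) - 1) / c) / Real.exp (θ * (μ + t)) := by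
        rw [le_div_iff₀ (Real.exp_pos _)]
        calc (P {x | Real.exp (θ * (μ + t)) ≤ f1 x}).toReal * Real.exp (θ * (μ + t))
            = Real.exp (θ * (μ + t)) * (P {x | Real.exp (θ * (μ + t)) ≤ f1 x}).toReal := by ring
          _ ≤ ∫ ω, f1 ω ∂P := hmark1
          _ ≤ Real.exp (μ * (Real.exp (θ * c) - 1) / c) := hU
      refine hle.trans ?_
      rw [div_le_iff₀ (Real.exp_pos _), ← Real.exp_add, Real.exp_le_exp]
      linarith
    -- Markov, lower tail
    set f2 : Ω → ℝ := fun ω => Real.exp (-lam * W ω) with hf2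
    have hf2int : Integrable f2 P := by
      refine (integrable_const (1:ℝ)).mono'
        ((Real.measurable_exp.comp (hWm.const_mul (-lam))).aestronglyMeasurable) ?_
      filter_upwards [hWpos] with ω h0
      rw [hf2, Real.norm_eq_abs, abs_of_pos (Real.exp_pos _)]
      exact Real.exp_le_one_iff.2 (mul_nonpos_of_nonpos_of_nonneg (by linarith) h0)
    have hmark2 := mul_meas_ge_le_integral_of_nonneg
      (ae_of_all P fun ω => (Real.exp_pos (-lam * W ω)).le) hf2int
      (Real.exp (-lam * (μ - t)))
    have hP2 : P {x | Real.exp (-lam * (μ - t)) ≤ f2 x} ≤ ENNReal.ofReal (Real.exp (-q)) := by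
      rw [ENNReal.le_ofReal_iff_toReal_le (measure_ne_top _ _) (Real.exp_pos _).le]
      have hle : (P {x | Real.exp (-lam * (μ - t)) ≤ f2 x}).toReal
          ≤ Real.exp (μ * (Real.exp (-lam * c) - 1) / c) / Real.exp (-lam * (μ - t)) := by
        rw [le_div_iff₀ (Real.exp_pos _)]
        calc (P {x | Real.exp (-lam * (μ - t)) ≤ f2 x}).toReal * Real.exp (-lam * (μ - t))
            = Real.exp (-lam * (μ - t)) * (P {x | Real.exp (-lam * (μ - t)) ≤ f2 x}).toReal := by
              ring
          _ ≤ ∫ ω, f2 ω ∂P := hmark2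
          _ ≤ Real.exp (μ * (Real.exp (-lam * c) - 1) / c) := hL
      refine hle.trans ?_
      rw [div_le_iff₀ (Real.exp_pos _), ← Real.exp_add, Real.exp_le_exp]
      nlinarith
    -- event inclusion
    have hsub : {ω | t < |W ω - μ|}
        ⊆ {x | Real.exp (θ * (μ + t)) ≤ f1 x} ∪ {x | Real.exp (-lam * (μ - t)) ≤ f2 x} := by
      intro ω hω
      have hω' : t < |W ω - μ| := hω
      rcases lt_abs.1 hω' with h | h
      · left
        have hWω : μ + t ≤ W ω := by linarith
        show Real.exp (θ * (μ + t)) ≤ Real.exp (θ * min (W ω) (μ + t))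
        rw [min_eq_right hWω]
      · right
        have hWω : W ω ≤ μ - t := by linarith
        show Real.exp (-lam * (μ - t)) ≤ Real.exp (-lam * W ω)
        rw [Real.exp_le_exp]
        exact mul_le_mul_of_nonpos_left hWω (by linarith : -lam ≤ 0)
    -- combine
    calc P {ω | t < |W ω - μ|}
        ≤ P ({x | Real.exp (θ * (μ + t)) ≤ f1 x} ∪ {x | Real.exp (-lam * (μ - t)) ≤ f2 x}) :=
          measure_mono hsub
      _ ≤ P {x | Real.exp (θ * (μ + t)) ≤ f1 x} + P {x | Real.exp (-lam * (μ - t)) ≤ f2 x} :=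
          measure_union_le _ _
      _ ≤ ENNReal.ofReal (Real.exp (-q)) + ENNReal.ofReal (Real.exp (-q)) := add_le_add hP1 hP2
      _ = ENNReal.ofReal (2 * Real.exp (-q)) := by
          rw [← ENNReal.ofReal_add (Real.exp_pos _).le (Real.exp_pos _).le]; ring_nf
      _ ≤ ENNReal.ofReal (Real.exp 1 * Real.exp (-q * (1 - s))) :=
          ENNReal.ofReal_le_ofReal (final_ineq he2 (by positivity))
end

section
/- Let 𝓘 be a finite index set, ℰ a random (possibly empty) subset of 𝓘, and E := |ℰ|. Let {Y_i}_{i∈𝓘} be a collection of real random variables that is independent of ℰ, and let ℓ be a positive integer with max_{i∈𝓘} ‖Y_i‖_ℓ ≤ y for some y ≥ 0. Then ‖Σ_{i∈ℰ} Y_i‖_ℓ ≤ y·‖E‖_ℓ. -/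
open MeasureTheory ProbabilityTheory Real

lemma rnorm_eq_lintegral {Ω : Type*} [MeasurableSpace Ω] (P : Measure Ω) (X : Ω → ℝ)
    (hX : Measurable X) (r : ℕ) :
    rnorm P X r = (∫⁻ ω, (‖X ω‖₊ : ENNReal) ^ r ∂P).toReal ^ ((r : ℝ)⁻¹) := by
  have h1 : ∫ ω, |X ω| ^ r ∂P = (∫⁻ ω, ENNReal.ofReal (|X ω| ^ r) ∂P).toReal := by
    refine integral_eq_lintegral_of_nonneg_ae (Filter.Eventually.of_forall fun ω => by positivity)
      ((hX.abs.pow_const r).aestronglyMeasurable)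
  have h2 : ∀ ω, ENNReal.ofReal (|X ω| ^ r) = (‖X ω‖₊ : ENNReal) ^ r := by
    intro ω
    rw [ENNReal.ofReal_pow (abs_nonneg _)]
    congr 1
    rw [← Real.norm_eq_abs, ofReal_norm, enorm_eq_nnnorm]
  rw [rnorm, h1]
  simp_rw [h2]

/-- **Lemma (conditional Minkowski)**: for a random subset `ℰ` of a finite index set
(encoded by its indicator function), independent of the family `{Y_i}`, the `ℓ`-norm of
`∑_{i∈ℰ} Y_i` is at most `y·‖|ℰ|‖_ℓ` whenever `max_i ‖Y_i‖_ℓ ≤ y`. -/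
theorem stmt_17 {Ω : Type*} [MeasurableSpace Ω] (P : Measure Ω) [IsProbabilityMeasure P]
    {ι : Type*} [Fintype ι]
    (ℰ : Ω → ι → Bool) (hℰm : Measurable ℰ)
    (Y : ι → Ω → ℝ) (hYm : ∀ i, Measurable (Y i))
    (hindep : IndepFun ℰ (fun ω i => Y i ω) P)
    (ℓ : ℕ) (hℓ : 1 ≤ ℓ)
    (hYint : ∀ i, Integrable (fun ω => |Y i ω| ^ ℓ) P)
    (y : ℝ) (hy : 0 ≤ y) (hYbd : ∀ i, rnorm P (Y i) ℓ ≤ y) :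
    rnorm P (fun ω => ∑ i ∈ Finset.univ.filter (fun i => ℰ ω i = true), Y i ω) ℓ
      ≤ y * rnorm P
          (fun ω => ((Finset.univ.filter (fun i => ℰ ω i = true)).card : ℝ)) ℓ := by
  classical
  have hℓ0 : (ℓ : ℝ) ≠ 0 := by positivity
  -- abbreviations
  set A : (ι → Bool) → Finset ι := fun b => Finset.univ.filter (fun i => b i = true) with hA
  set T : (ι → Bool) → Ω → ℝ := fun b ω => ∑ i ∈ A b, Y i ω with hT
  set n : (ι → Bool) → ℕ := fun b => (A b).card with hn
  set L : (Ω → ℝ) → ENNReal := fun f => ∫⁻ ω, (‖f ω‖₊ : ENNReal) ^ ℓ ∂P with hLdef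
  set p : (ι → Bool) → ENNReal :=
    fun b => ∫⁻ ω, (if ℰ ω = b then (1 : ENNReal) else 0) ∂P with hp
  set S : Ω → ℝ := fun ω => ∑ i ∈ Finset.univ.filter (fun i => ℰ ω i = true), Y i ω with hS
  set Ef : Ω → ℝ :=
    fun ω => ((Finset.univ.filter (fun i => ℰ ω i = true)).card : ℝ) with hEf
  have hSeq : ∀ ω, S ω = T (ℰ ω) ω := fun ω => rfl
  have hEeq : ∀ ω, Ef ω = (n (ℰ ω) : ℝ) := fun ω => rfl
  have hTm : ∀ b, Measurable (T b) := fun b => Finset.measurable_sum _ (fun i _ => hYm i)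
  -- pointwise decomposition over the (finitely many) values of ℰ
  have hpt : ∀ (g : (ι → Bool) → Ω → ENNReal) (ω : Ω),
      g (ℰ ω) ω = ∑ b : ι → Bool, (if ℰ ω = b then (1 : ENNReal) else 0) * g b ω := by
    intro g ω
    simp [ite_mul, Finset.sum_ite_eq]
  have hdec : ∀ (g : (ι → Bool) → Ω → ENNReal), (∀ b, Measurable (g b)) →
      ∫⁻ ω, g (ℰ ω) ω ∂P
        = ∑ b : ι → Bool, ∫⁻ ω, (if ℰ ω = b then (1 : ENNReal) else 0) * g b ω ∂P := by
    intro g hg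
    rw [show (fun ω => g (ℰ ω) ω)
        = fun ω => ∑ b : ι → Bool, (if ℰ ω = b then (1 : ENNReal) else 0) * g b ω from
      funext fun ω => hpt g ω]
    exact lintegral_finset_sum _ fun b _ =>
      ((measurable_const.ite (hℰm (measurableSet_singleton b)) measurable_const)).mul (hg b)
  -- independence
  have hYvm : Measurable (fun ω i => Y i ω) := measurable_pi_lambda _ hYm
  have hindep' : ∀ b, ∫⁻ ω, (if ℰ ω = b then (1 : ENNReal) else 0)
        * (‖T b ω‖₊ : ENNReal) ^ ℓ ∂P = p b * L (T b) := by
    intro b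
    have hF : Measurable (fun c : ι → Bool => if c = b then (1 : ENNReal) else 0) :=
      measurable_of_countable _
    have hG : Measurable (fun v : ι → ℝ => (‖∑ i ∈ A b, v i‖₊ : ENNReal) ^ ℓ) :=
      ((Finset.measurable_sum _ (fun i _ => measurable_pi_apply i)).nnnorm.coe_nnreal_ennreal).pow_const ℓ
    exact lintegral_mul_eq_lintegral_mul_lintegral_of_indepFun
      (hF.comp hℰm) (hG.comp hYvm) (hindep.comp hF hG)
  -- relating eLpNorm' with L
  have hLN : ∀ f : Ω → ℝ, eLpNorm' f (ℓ : ℝ) P = (L f) ^ ((ℓ : ℝ)⁻¹) := by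
    intro f
    rw [eLpNorm', one_div]
    congr 1
    refine lintegral_congr fun ω => ?_
    rw [← ENNReal.rpow_natCast, enorm_eq_nnnorm]
  have hYfin : ∀ i, L (Y i) ≠ ⊤ := by
    intro i
    have h : ∫⁻ ω, (‖|Y i ω| ^ ℓ‖₊ : ENNReal) ∂P < ⊤ := (hYint i).2
    have : (fun ω => ((‖|Y i ω| ^ ℓ‖₊ : ENNReal))) = fun ω => (‖Y i ω‖₊ : ENNReal) ^ ℓ := by
      funext ω
      rw [nnnorm_pow, nnnorm_abs, ENNReal.coe_pow]
    rw [this] at h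
    exact h.ne
  have hYle : ∀ i, eLpNorm' (Y i) (ℓ : ℝ) P ≤ ENNReal.ofReal y := by
    intro i
    rw [hLN]
    have hne : (L (Y i)) ^ ((ℓ : ℝ)⁻¹) ≠ ⊤ :=
      ENNReal.rpow_ne_top_of_nonneg (by positivity) (hYfin i)
    rw [ENNReal.le_ofReal_iff_toReal_le hne hy, ← ENNReal.toReal_rpow]
    exact (rnorm_eq_lintegral P (Y i) (hYm i) ℓ) ▸ hYbd i
  -- Minkowski for each fixed set
  have hMink : ∀ b, L (T b) ≤ (ENNReal.ofReal y * (n b : ENNReal)) ^ ℓ := by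
    intro b
    have h1 : eLpNorm' (T b) (ℓ : ℝ) P ≤ ∑ i ∈ A b, eLpNorm' (Y i) (ℓ : ℝ) P := by
      have := eLpNorm'_sum_le (μ := P) (f := Y) (s := A b)
        (fun i _ => (hYm i).aestronglyMeasurable) (Nat.one_le_cast.mpr hℓ)
      have heq : (∑ i ∈ A b, Y i) = T b := by
        funext ω; simp [hT, Finset.sum_apply]
      rwa [heq] at this
    have h2 : ∑ i ∈ A b, eLpNorm' (Y i) (ℓ : ℝ) P
        ≤ ENNReal.ofReal y * (n b : ENNReal) := by
      calc ∑ i ∈ A b, eLpNorm' (Y i) (ℓ : ℝ) P ≤ ∑ _i ∈ A b, ENNReal.ofReal y :=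
            Finset.sum_le_sum fun i _ => hYle i
        _ = (n b : ENNReal) * ENNReal.ofReal y := by
            simp [hn, Finset.sum_const, nsmul_eq_mul]
        _ = ENNReal.ofReal y * (n b : ENNReal) := mul_comm _ _
    have h3 : L (T b) = (eLpNorm' (T b) (ℓ : ℝ) P) ^ ℓ := by
      rw [hLN, ← ENNReal.rpow_natCast _ ℓ, ← ENNReal.rpow_mul, inv_mul_cancel₀ hℓ0,
        ENNReal.rpow_one]
    rw [h3]
    exact pow_le_pow_left' (h1.trans h2) ℓ
  -- decomposition of L S and L Ef
  have e1 : L S = ∑ b : ι → Bool, p b * L (T b) := by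
    have : L S = ∫⁻ ω, (‖T (ℰ ω) ω‖₊ : ENNReal) ^ ℓ ∂P := rfl
    rw [this, hdec (fun b ω => (‖T b ω‖₊ : ENNReal) ^ ℓ)
      (fun b => ((hTm b).nnnorm.coe_nnreal_ennreal).pow_const ℓ)]
    exact Finset.sum_congr rfl fun b _ => hindep' b
  have e2 : L Ef = ∑ b : ι → Bool, p b * (n b : ENNReal) ^ ℓ := by
    have : L Ef = ∫⁻ ω, (‖(n (ℰ ω) : ℝ)‖₊ : ENNReal) ^ ℓ ∂P := rfl
    rw [this, hdec (fun b _ => (‖(n b : ℝ)‖₊ : ENNReal) ^ ℓ) (fun b => measurable_const)]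
    refine Finset.sum_congr rfl fun b _ => ?_
    have hm : Measurable (fun ω => if ℰ ω = b then (1 : ENNReal) else 0) := by
      exact measurable_const.ite (hℰm (measurableSet_singleton b)) measurable_const
    rw [lintegral_mul_const _ hm]
    congr 1
    simp
  -- the key inequality
  have key : L S ≤ ENNReal.ofReal y ^ ℓ * L Ef := by
    rw [e1, e2, Finset.mul_sum]
    refine Finset.sum_le_sum fun b _ => ?_
    calc p b * L (T b) ≤ p b * (ENNReal.ofReal y * (n b : ENNReal)) ^ ℓ :=
          mul_le_mul_right (hMink b) _
      _ = ENNReal.ofReal y ^ ℓ * (p b * (n b : ENNReal) ^ ℓ) := by ring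
  -- finiteness
  have hpfin : ∀ b, p b ≤ 1 := by
    intro b
    have : p b ≤ ∫⁻ _ω, (1 : ENNReal) ∂P :=
      lintegral_mono fun ω => by split <;> simp
    simpa using this
  have hEfin : L Ef ≠ ⊤ := by
    rw [e2]
    refine (ENNReal.sum_lt_top.2 fun b _ => ?_).ne
    exact ENNReal.mul_lt_top ((hpfin b).trans_lt ENNReal.one_lt_top)
      (ENNReal.pow_lt_top (ENNReal.natCast_lt_top _))
  have hSfin : L S ≠ ⊤ :=
    ne_top_of_le_ne_top (ENNReal.mul_ne_top (ENNReal.pow_ne_top ENNReal.ofReal_ne_top) hEfin) key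
  -- measurability of S and Ef
  have hSm : Measurable S := by
    have : S = fun ω => ∑ b : ι → Bool, if ℰ ω = b then T b ω else 0 := by
      funext ω
      rw [Finset.sum_ite_eq]
      simp [hSeq ω]
    rw [this]
    exact Finset.measurable_sum _ fun b _ =>
      Measurable.ite (hℰm (measurableSet_singleton b)) (hTm b) measurable_const
  have hEm : Measurable Ef :=
    (measurable_of_countable (fun b : ι → Bool => (n b : ℝ))).comp hℰm
  -- conclusion
  rw [rnorm_eq_lintegral P S hSm ℓ, rnorm_eq_lintegral P Ef hEm ℓ]
  have h4 : (L S).toReal ≤ y ^ ℓ * (L Ef).toReal := by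
    have := ENNReal.toReal_mono
      (ENNReal.mul_ne_top (ENNReal.pow_ne_top ENNReal.ofReal_ne_top) hEfin) key
    rwa [ENNReal.toReal_mul, ENNReal.toReal_pow, ENNReal.toReal_ofReal hy] at this
  calc (L S).toReal ^ ((ℓ : ℝ)⁻¹)
      ≤ (y ^ ℓ * (L Ef).toReal) ^ ((ℓ : ℝ)⁻¹) :=
        Real.rpow_le_rpow ENNReal.toReal_nonneg h4 (by positivity)
    _ = y * (L Ef).toReal ^ ((ℓ : ℝ)⁻¹) := by
        rw [Real.mul_rpow (by positivity) ENNReal.toReal_nonneg, ← Real.rpow_natCast y ℓ,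
          ← Real.rpow_mul hy, mul_inv_cancel₀ hℓ0, Real.rpow_one]
end
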